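/- arXiv:1912.10390 — 9 statements merged into one kernel-verified Lean document; each statement's English description precedes it below -/
import Mathlib

section
/- Let X ∈ ℂ^{n×r} with 1 ≤ r ≤ n have polar decomposition X = U P, where U has orthonormal columns (U^H U = I_r) and P is Hermitian positive semidefinite. Then for any U' ∈ ℂ^{n×r} with orthonormal columns, Re(trace(U^H X)) ≥ Re(trace(U'^H X)). -/
open Matrix ComplexOrder

lemma trace_conjTranspose_mul_self_re_nonneg {m k : ℕ} (C : Matrix (Fin m) (Fin k) ℂ) :
    0 ≤ ((Cᴴ * C).trace).re := by
  rw [Matrix.trace]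
  simp only [Matrix.diag, Matrix.mul_apply, Matrix.conjTranspose_apply, Complex.re_sum]
  apply Finset.sum_nonneg
  intro i _
  apply Finset.sum_nonneg
  intro j _
  have h := (Complex.le_def.mp (star_mul_self_nonneg (C j i))).1
  simpa using h

/-- The real inner product `⟨X,Y⟩_ℝ = Re(trace(Xᴴ Y))`. The orthogonal polar
factor `U` of `X = U P` maximizes `Re(trace(U'ᴴ X))` over all `U'` with
orthonormal columns. -/
theorem polar_factor_maximizes_real_trace (n r : ℕ) (hr : 1 ≤ r) (hrn : r ≤ n)
    (X U : Matrix (Fin n) (Fin r) ℂ) (P : Matrix (Fin r) (Fin r) ℂ)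
    (hU : Uᴴ * U = 1) (hP : P.PosSemidef) (hX : X = U * P) :
    ∀ U' : Matrix (Fin n) (Fin r) ℂ, U'ᴴ * U' = 1 →
      ((U'ᴴ * X).trace).re ≤ ((Uᴴ * X).trace).re := by
  intro U' hU'
  open scoped MatrixOrder in
  set S := CFC.sqrt P with hSdef
  open scoped MatrixOrder in
  have hSh : Sᴴ = S := (Matrix.nonneg_iff_posSemidef.mp (CFC.sqrt_nonneg P)).isHermitian
  open scoped MatrixOrder in
  have hSS : S * S = P := CFC.sqrt_mul_sqrt_self P hP.nonneg
  set A := U * S with hA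
  set B := U' * S with hB
  have hUX : Uᴴ * X = P := by rw [hX, ← Matrix.mul_assoc, hU, Matrix.one_mul]
  have hAA : Aᴴ * A = P := by
    rw [hA, Matrix.conjTranspose_mul, hSh, Matrix.mul_assoc,
      ← Matrix.mul_assoc Uᴴ U S, hU, Matrix.one_mul, hSS]
  have hBB : Bᴴ * B = P := by
    rw [hB, Matrix.conjTranspose_mul, hSh, Matrix.mul_assoc,
      ← Matrix.mul_assoc U'ᴴ U' S, hU', Matrix.one_mul, hSS]
  have hBA : (Bᴴ * A).trace = (U'ᴴ * X).trace := by
    rw [hB, hA, Matrix.conjTranspose_mul, hSh, Matrix.mul_assoc,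
      Matrix.trace_mul_comm S, Matrix.mul_assoc, Matrix.mul_assoc, hSS, ← hX]
  have hAB : ((Aᴴ * B).trace).re = ((Bᴴ * A).trace).re := by
    have h : (Aᴴ * B).trace = star ((Bᴴ * A).trace) := by
      have := Matrix.trace_conjTranspose (Bᴴ * A)
      simpa [Matrix.conjTranspose_mul] using this
    rw [h, Complex.star_def, Complex.conj_re]
  have h0 := trace_conjTranspose_mul_self_re_nonneg (A - B)
  have hexp : (A - B)ᴴ * (A - B) = Aᴴ * A - Aᴴ * B - Bᴴ * A + Bᴴ * B := by
    simp only [Matrix.conjTranspose_sub, Matrix.sub_mul, Matrix.mul_sub]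
    abel
  rw [hexp] at h0
  simp only [Matrix.trace_sub, Matrix.trace_add, Complex.sub_re, Complex.add_re] at h0
  rw [hUX]
  rw [hAA, hBB] at h0
  have h1 : (Aᴴ * B).trace.re = (U'ᴴ * X).trace.re := by rw [hAB, hBA]
  linarith
end

section
/- Let X ∈ ℂ^{n×r} with 1 ≤ r ≤ n have polar decomposition X = U P with U^H U = I_r and P Hermitian positive semidefinite. Then U is a best approximation to X in Frobenius norm among matrices with orthonormal columns: for any U' with U'^H U' = I_r, ‖X − U‖_F ≤ ‖X − U'‖_F. -/
open Matrix ComplexOrder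

noncomputable def frobNorm {n r : ℕ} (X : Matrix (Fin n) (Fin r) ℂ) : ℝ :=
  Real.sqrt (∑ i, ∑ j, Complex.normSq (X i j))

lemma re_dot_self_nonneg {m : ℕ} (v : Fin m → ℂ) : 0 ≤ (star v ⬝ᵥ v).re := by
  simp only [dotProduct, Pi.star_apply, Complex.re_sum]
  refine Finset.sum_nonneg fun k _ => ?_
  simp [Complex.mul_re, Complex.conj_re, Complex.conj_im]
  nlinarith [sq_nonneg ((v k).re), sq_nonneg ((v k).im)]

lemma re_dot_comm {m : ℕ} (v w : Fin m → ℂ) : (star w ⬝ᵥ v).re = (star v ⬝ᵥ w).re := by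
  simp only [dotProduct, Pi.star_apply, Complex.re_sum]
  refine Finset.sum_congr rfl fun k _ => ?_
  simp [Complex.mul_re, Complex.conj_re, Complex.conj_im]
  ring

lemma re_dot_le {m : ℕ} (v w : Fin m → ℂ) :
    2 * (star v ⬝ᵥ w).re ≤ (star v ⬝ᵥ v).re + (star w ⬝ᵥ w).re := by
  have h0 := re_dot_self_nonneg (v - w)
  have h1 : star (v - w) ⬝ᵥ (v - w)
      = star v ⬝ᵥ v - star v ⬝ᵥ w - star w ⬝ᵥ v + star w ⬝ᵥ w := by
    rw [star_sub, sub_dotProduct, dotProduct_sub, dotProduct_sub]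
    ring
  rw [h1] at h0
  simp only [Complex.add_re, Complex.sub_re] at h0
  have h2 := re_dot_comm v w
  linarith

lemma key_trace_ineq {m : ℕ} (W P : Matrix (Fin m) (Fin m) ℂ)
    (hW : ((1 : Matrix (Fin m) (Fin m) ℂ) - Wᴴ * W).PosSemidef)
    (hP : P.PosSemidef) : (trace (W * P)).re ≤ (trace P).re := by
  set S := (open scoped MatrixOrder in CFC.sqrt P) with hSdef
  have hS : S.PosSemidef := by open scoped MatrixOrder in exact (CFC.sqrt_nonneg P).posSemidef
  have hSS : S * S = P := by open scoped MatrixOrder in exact CFC.sqrt_mul_sqrt_self P hP.nonneg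
  have htr : trace (W * P) = trace (S * W * S) := by
    rw [← hSS, show W * (S * S) = (W * S) * S by noncomm_ring, trace_mul_comm, ← mul_assoc]
  rw [htr]
  simp only [trace, diag, Complex.re_sum]
  refine Finset.sum_le_sum fun i _ => ?_
  set v : Fin m → ℂ := fun k => S k i with hv
  have hvS : ∀ k, S i k = star (v k) := by
    intro k
    have := congrFun (congrFun hS.1 i) k
    rw [conjTranspose_apply] at this
    exact this.symm
  have h1 : (S * W * S) i i = star v ⬝ᵥ (W *ᵥ v) := by
    rw [mul_assoc]
    simp only [mul_apply, dotProduct, mulVec, Pi.star_apply]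
    exact Finset.sum_congr rfl fun l _ => by rw [hvS l]
  have h2 : P i i = star v ⬝ᵥ v := by
    rw [← hSS]
    simp only [mul_apply, dotProduct, Pi.star_apply]
    exact Finset.sum_congr rfl fun l _ => by rw [hvS l]
  have h3 : (star (W *ᵥ v) ⬝ᵥ (W *ᵥ v)).re ≤ (star v ⬝ᵥ v).re := by
    have h := hW.dotProduct_mulVec_nonneg v
    have heq : star v ⬝ᵥ ((1 - Wᴴ * W) *ᵥ v)
        = star v ⬝ᵥ v - star (W *ᵥ v) ⬝ᵥ (W *ᵥ v) := by
      rw [sub_mulVec, one_mulVec, dotProduct_sub]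
      congr 1
      rw [← mulVec_mulVec, dotProduct_mulVec, ← star_mulVec]
    have hre : 0 ≤ (star v ⬝ᵥ ((1 - Wᴴ * W) *ᵥ v)).re := by
      have := (Complex.le_def.mp h).1
      simpa using this
    rw [heq] at hre
    simp only [Complex.sub_re] at hre
    linarith
  have h4 := re_dot_le v (W *ᵥ v)
  rw [h1, h2]
  linarith

lemma frob_sq_eq {n r : ℕ} (A : Matrix (Fin n) (Fin r) ℂ) :
    (∑ i, ∑ j, Complex.normSq (A i j)) = (trace (Aᴴ * A)).re := by
  simp only [trace, diag, mul_apply, conjTranspose_apply, Complex.re_sum]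
  rw [Finset.sum_comm]
  refine Finset.sum_congr rfl fun i _ => Finset.sum_congr rfl fun j _ => ?_
  simp [Complex.normSq_apply, Complex.mul_re, Complex.conj_re, Complex.conj_im]

lemma expand_sq {n r : ℕ} (X V : Matrix (Fin n) (Fin r) ℂ) (hV : Vᴴ * V = 1) :
    (trace ((X - V)ᴴ * (X - V))).re
      = (trace (Xᴴ * X)).re + r - 2 * (trace (Vᴴ * X)).re := by
  have h : (X - V)ᴴ * (X - V) = Xᴴ * X - Xᴴ * V - Vᴴ * X + Vᴴ * V := by
    rw [conjTranspose_sub, Matrix.sub_mul, Matrix.mul_sub, Matrix.mul_sub]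
    abel
  rw [h, hV]
  have h1 : trace (Xᴴ * V) = star (trace (Vᴴ * X)) := by
    rw [← trace_conjTranspose]
    congr 1
    simp [conjTranspose_mul]
  simp only [trace_add, trace_sub, Complex.add_re, Complex.sub_re, h1, trace_one]
  simp [Complex.star_def]
  ring

/-- The orthogonal polar factor `U` of `X = U P` is a best approximation to `X`
in Frobenius norm among matrices with orthonormal columns. -/
theorem polar_factor_best_orthonormal_approximation (n r : ℕ) (hr : 1 ≤ r) (hrn : r ≤ n)
    (X U : Matrix (Fin n) (Fin r) ℂ) (P : Matrix (Fin r) (Fin r) ℂ)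
    (hU : Uᴴ * U = 1) (hP : P.PosSemidef) (hX : X = U * P) :
    ∀ U' : Matrix (Fin n) (Fin r) ℂ, U'ᴴ * U' = 1 →
      frobNorm (X - U) ≤ frobNorm (X - U') := by
  intro U' hU'
  unfold frobNorm
  apply Real.sqrt_le_sqrt
  rw [frob_sq_eq, frob_sq_eq, expand_sq X U hU, expand_sq X U' hU']
  have hUX : Uᴴ * X = P := by rw [hX, ← Matrix.mul_assoc, hU, Matrix.one_mul]
  have hU'X : U'ᴴ * X = (U'ᴴ * U) * P := by rw [hX, Matrix.mul_assoc]
  set W := U'ᴴ * U with hWdef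
  have hWpsd : ((1 : Matrix (Fin r) (Fin r) ℂ) - Wᴴ * W).PosSemidef := by
    have hQQ : U' * U'ᴴ * (U' * U'ᴴ) = U' * U'ᴴ := by
      rw [Matrix.mul_assoc, ← Matrix.mul_assoc U'ᴴ, hU', Matrix.one_mul]
    have hQ : ((1 : Matrix (Fin n) (Fin n) ℂ) - U' * U'ᴴ).PosSemidef := by
      have heq : (1 - U' * U'ᴴ) = ((1 : Matrix (Fin n) (Fin n) ℂ) - U' * U'ᴴ)ᴴ * (1 - U' * U'ᴴ) := by
        rw [conjTranspose_sub, conjTranspose_one, conjTranspose_mul, conjTranspose_conjTranspose]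
        rw [sub_mul, one_mul, mul_sub, mul_one, hQQ]
        abel
      rw [heq]
      exact posSemidef_conjTranspose_mul_self _
    have h := hQ.conjTranspose_mul_mul_same U
    have heq2 : Uᴴ * (1 - U' * U'ᴴ) * U = 1 - Wᴴ * W := by
      rw [Matrix.mul_sub, Matrix.mul_one, Matrix.sub_mul, hU]
      congr 1
      simp [hWdef, conjTranspose_mul, Matrix.mul_assoc]
    rwa [heq2] at h
  have hk := key_trace_ineq W P hWpsd hP
  rw [hUX, hU'X]
  linarith
end

section
/- Let U, U' ∈ ℂ^{n×r} with U^H U = U'^H U' = I_r, and let P ∈ ℂ^{r×r} be Hermitian positive semidefinite with minimal eigenvalue σ_min(P) > 0. Then Re(trace((U − U')^H (U P))) ≥ (1/2) σ_min(P) ‖U − U'‖_F². -/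
open Matrix ComplexOrder

lemma trace_re_nonneg_of_psd {m : ℕ} {M : Matrix (Fin m) (Fin m) ℂ}
    (hM : M.PosSemidef) : 0 ≤ M.trace.re := by
  have h : ∀ i, 0 ≤ (M i i).re := by
    intro i
    have := hM.re_dotProduct_nonneg (Pi.single i 1)
    simpa [dotProduct, mulVec, Pi.single_apply, Finset.mul_sum] using this
  simpa [Matrix.trace, Matrix.diag, Complex.re_sum] using Finset.sum_nonneg fun i _ => h i

/-- If `U, U'` have orthonormal columns and `P` is Hermitian positive
semidefinite with minimal eigenvalue `σ > 0`, then
`Re(trace((U − U')ᴴ (U P))) ≥ (σ/2) ‖U − U'‖_F²`. -/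
theorem trace_lower_bound_of_posdef (n r : ℕ)
    (U U' : Matrix (Fin n) (Fin r) ℂ) (P : Matrix (Fin r) (Fin r) ℂ)
    (hU : Uᴴ * U = 1) (hU' : U'ᴴ * U' = 1)
    (hPh : P.IsHermitian) (hP : P.PosSemidef)
    (hσ : 0 < ⨅ p, hPh.eigenvalues p) :
    (1 / 2) * (⨅ p, hPh.eigenvalues p) * (frobNorm (U - U')) ^ 2 ≤
      (((U - U')ᴴ * (U * P)).trace).re := by
  rcases Nat.eq_zero_or_pos r with hr | hr
  · subst hr
    simp [frobNorm, Matrix.trace]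
  haveI : Nonempty (Fin r) := ⟨⟨0, hr⟩⟩
  set σ := ⨅ p, hPh.eigenvalues p with hσdef
  have hσ' : ∀ p, σ ≤ hPh.eigenvalues p := fun p =>
    ciInf_le (Set.Finite.bddBelow (Set.finite_range _)) p
  set D := U - U' with hD
  -- P - σ•1 is PSD
  have hR : (P - (σ : ℂ) • 1).PosSemidef := by
    set V : Matrix (Fin r) (Fin r) ℂ := (hPh.eigenvectorUnitary : Matrix (Fin r) (Fin r) ℂ)
    have hVV : V * Vᴴ = 1 := by
      have := (Matrix.mem_unitaryGroup_iff).mp hPh.eigenvectorUnitary.2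
      simpa [Matrix.star_eq_conjTranspose] using this
    have h1 : P - (σ : ℂ) • 1 =
        V * diagonal (fun p => ((hPh.eigenvalues p - σ : ℝ) : ℂ)) * Vᴴ := by
      have hspec := hPh.spectral_theorem
      calc P - (σ : ℂ) • 1
          = V * diagonal (RCLike.ofReal ∘ hPh.eigenvalues) * Vᴴ - (σ : ℂ) • (V * Vᴴ) := by
            rw [hVV]; exact congrArg (· - (σ : ℂ) • 1) hspec
        _ = V * diagonal (fun p => ((hPh.eigenvalues p - σ : ℝ) : ℂ)) * Vᴴ := by
            have : diagonal (fun p => ((hPh.eigenvalues p - σ : ℝ) : ℂ)) =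
                diagonal (RCLike.ofReal ∘ hPh.eigenvalues) - (σ : ℂ) • 1 := by
              simp [← Matrix.diagonal_sub, Matrix.smul_one_eq_diagonal]
            rw [this]
            noncomm_ring
    rw [h1]
    exact PosSemidef.mul_mul_conjTranspose_same
      (posSemidef_diagonal_iff.mpr fun p => by
        exact Complex.zero_le_real.mpr (sub_nonneg.mpr (hσ' p))) V
  -- key identities
  have hDU : Dᴴ * U = 1 - U'ᴴ * U := by
    rw [hD, Matrix.conjTranspose_sub, Matrix.sub_mul, hU]
  have hDD : Dᴴ * D = (1 - U'ᴴ * U) + (1 - Uᴴ * U') := by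
    rw [hD, Matrix.conjTranspose_sub, Matrix.sub_mul, Matrix.mul_sub, Matrix.mul_sub, hU, hU']
    noncomm_ring
  -- conj trick: re tr((1 - UᴴU')P) = re tr((1 - U'ᴴU)P)
  have hconj : (((1 - Uᴴ * U') * P).trace).re = (((1 - U'ᴴ * U) * P).trace).re := by
    have h2 : (1 - Uᴴ * U') = (1 - U'ᴴ * U)ᴴ := by
      simp [Matrix.conjTranspose_sub, Matrix.conjTranspose_mul]
    rw [h2]
    have h3 : ((1 - U'ᴴ * U)ᴴ * P) = ((1 - U'ᴴ * U)ᴴ * Pᴴ) := by rw [hPh.eq]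
    rw [h3, ← Matrix.conjTranspose_mul, Matrix.trace_conjTranspose,
      Matrix.trace_mul_comm]
    exact Complex.conj_re _
  -- 2 * target trace = tr(DᴴD P)
  have htwo : ((Dᴴ * D * P).trace).re = 2 * ((Dᴴ * (U * P)).trace).re := by
    rw [← Matrix.mul_assoc, hDU, hDD, Matrix.add_mul, Matrix.trace_add]
    rw [Complex.add_re, hconj]; ring
  -- frobNorm² = re tr(DᴴD)
  have hF : frobNorm D ^ 2 = ((Dᴴ * D).trace).re := by
    rw [frobNorm, (Real.sq_sqrt (Finset.sum_nonneg fun i _ =>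
      Finset.sum_nonneg fun j _ => Complex.normSq_nonneg _) :
        Real.sqrt (∑ i, ∑ j, Complex.normSq (D i j)) ^ 2 = ∑ i, ∑ j, Complex.normSq (D i j))]
    rw [Matrix.trace, Complex.re_sum]
    rw [Finset.sum_comm]
    refine Finset.sum_congr rfl fun i _ => ?_
    simp only [Matrix.diag_apply, Matrix.mul_apply, Complex.re_sum,
      Matrix.conjTranspose_apply]
    refine Finset.sum_congr rfl fun k _ => ?_
    rw [Complex.star_def, ← Complex.normSq_eq_conj_mul_self, Complex.ofReal_re]
  -- tr(DᴴD (P - σ1)).re ≥ 0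
  have hkey : 0 ≤ ((Dᴴ * D * (P - (σ : ℂ) • 1)).trace).re := by
    have e : ((D * (P - (σ : ℂ) • 1) * Dᴴ).trace) = ((Dᴴ * D * (P - (σ : ℂ) • 1)).trace) := by
      rw [Matrix.trace_mul_comm, ← Matrix.mul_assoc]
    rw [← e]
    exact trace_re_nonneg_of_psd (hR.mul_mul_conjTranspose_same D)
  have hexp : ((Dᴴ * D * (P - (σ : ℂ) • 1)).trace).re =
      ((Dᴴ * D * P).trace).re - σ * ((Dᴴ * D).trace).re := by
    rw [Matrix.mul_sub, Matrix.trace_sub, Complex.sub_re]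
    congr 1
    rw [Matrix.mul_smul, Matrix.mul_one, Matrix.trace_smul, smul_eq_mul,
      Complex.re_ofReal_mul]
  rw [hexp] at hkey
  rw [hF]
  linarith
end

section
/- Let h : ℂ^{n×r} → ℝ be differentiable and U ∈ St(r,n,ℂ). If the Riemannian gradient of h at U vanishes (∇h(U) = U·sym(U^H ∇h(U))), then U^H ∇h(U) is Hermitian. If moreover ∇h(U) has full rank r and U^H ∇h(U) is positive semidefinite, then U is the (unique) orthogonal polar factor of ∇h(U). -/
open Matrix

attribute [local instance] Matrix.frobeniusNormedAddCommGroup Matrix.frobeniusNormedSpace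
open ComplexOrder

lemma aux_isUnit_of_rank_eq {r : ℕ} (S : Matrix (Fin r) (Fin r) ℂ)
    (hS : S.rank = r) : IsUnit S := by
  rw [← Matrix.mulVec_surjective_iff_isUnit]
  have hr : LinearMap.range S.mulVecLin = ⊤ := by
    apply Submodule.eq_top_of_finrank_eq
    rw [← Matrix.rank, hS]
    simp [Module.finrank_pi]
  intro v
  have := hr ▸ Submodule.mem_top (x := v) (R := ℂ)
  obtain ⟨w, hw⟩ := this
  exact ⟨w, hw⟩

/-- If the Riemannian gradient of `h` at a Stiefel point `U` vanishes, then
`Uᴴ ∇h(U)` is Hermitian; if moreover `∇h(U)` has full rank `r` and `Uᴴ ∇h(U)` is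
positive semidefinite, then `U` is the (unique) orthogonal polar factor of `∇h(U)`. -/
theorem polar_factor_self_of_riemannianGrad_eq_zero (n r : ℕ)
    (h : Matrix (Fin n) (Fin r) ℂ → ℝ)
    (U G : Matrix (Fin n) (Fin r) ℂ)
    (hU : Uᴴ * U = 1)
    (hdiff : DifferentiableAt ℝ h U)
    (hgrad : ∀ Z, fderiv ℝ h U Z = ((Gᴴ * Z).trace).re)
    (hstat : G - U * ((1 / 2 : ℂ) • (Uᴴ * G + Gᴴ * U)) = 0) :
    (Uᴴ * G).IsHermitian ∧
      (G.rank = r → (Uᴴ * G).PosSemidef →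
        ∀ (U₂ : Matrix (Fin n) (Fin r) ℂ) (P₂ : Matrix (Fin r) (Fin r) ℂ),
          G = U₂ * P₂ → U₂ᴴ * U₂ = 1 → P₂.PosSemidef → U₂ = U) := by
  set T : Matrix (Fin r) (Fin r) ℂ := (1 / 2 : ℂ) • (Uᴴ * G + Gᴴ * U) with hT
  have hGUT : G = U * T := by
    have := sub_eq_zero.mp hstat
    exact this
  have hTherm : T.IsHermitian := by
    unfold Matrix.IsHermitian
    rw [hT, Matrix.conjTranspose_smul, Matrix.conjTranspose_add]
    simp [Matrix.conjTranspose_mul, add_comm]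
  have hUG : Uᴴ * G = T := by
    rw [hGUT, ← Matrix.mul_assoc, hU, Matrix.one_mul]
  refine ⟨hUG ▸ hTherm, ?_⟩
  intro hrank hpsd U₂ P₂ hG2 hU2 hP2
  -- P₂ ^ 2 = T ^ 2
  have hsq : P₂ ^ 2 = T ^ 2 := by
    have h1 : Gᴴ * G = P₂ * P₂ := by
      rw [hG2, Matrix.conjTranspose_mul, Matrix.mul_assoc, ← Matrix.mul_assoc U₂ᴴ, hU2,
        Matrix.one_mul, hP2.1]
    have h2 : Gᴴ * G = T * T := by
      rw [hGUT, Matrix.conjTranspose_mul, Matrix.mul_assoc, ← Matrix.mul_assoc Uᴴ, hU,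
        Matrix.one_mul, hTherm.eq]
    rw [pow_two, pow_two, ← h1, ← h2]
  have hTP : P₂ = T := by
    open scoped MatrixOrder in
    exact (CFC.sq_eq_sq_iff P₂ T hP2.nonneg (hUG ▸ hpsd).nonneg).mp hsq
  -- T is invertible
  have hTrank : T.rank = r := by
    have h1 : G.rank ≤ T.rank := hGUT ▸ Matrix.rank_mul_le_right U T
    have h2 : T.rank ≤ r := by
      simpa using T.rank_le_card_width
    omega
  have hTunit : IsUnit T := aux_isUnit_of_rank_eq T hTrank
  have hdet : IsUnit T.det := (Matrix.isUnit_iff_isUnit_det T).mp hTunit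
  have key : U₂ * T = U * T := by rw [← hTP, ← hG2, hGUT, hTP]
  have := congrArg (· * T⁻¹) key
  simpa [Matrix.mul_assoc, Matrix.mul_nonsing_inv T hdet] using this
end

section
/- Let h : ℂ^{n×r} → ℝ be differentiable, U ∈ St(r,n,ℂ), ∇h(U) ≠ 0, and let ∇h(U) = U_* P be a polar decomposition. Then ‖U_* − U‖_F ≥ ‖grad h(U)‖_F / ((r+1)·‖∇h(U)‖_F), where grad h(U) = ∇h(U) − U·sym(U^H ∇h(U)) is the Riemannian gradient. -/
open Matrix

attribute [local instance] Matrix.frobeniusNormedAddCommGroup Matrix.frobeniusNormedSpace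
open ComplexOrder

lemma frobNorm_eq_norm {n r : ℕ} (X : Matrix (Fin n) (Fin r) ℂ) : frobNorm X = ‖X‖ := by
  rw [frobNorm, Matrix.frobenius_norm_def, Real.sqrt_eq_rpow]
  congr 1
  refine Finset.sum_congr rfl fun i _ => Finset.sum_congr rfl fun j _ => ?_
  rw [Complex.normSq_eq_norm_sq, Real.rpow_two]

lemma frob_sq {a b : ℕ} (A : Matrix (Fin a) (Fin b) ℂ) :
    ‖A‖ ^ 2 = ((Aᴴ * A).trace).re := by
  rw [Matrix.frobenius_norm_def, ← Real.rpow_natCast _ 2, ← Real.rpow_mul (by positivity)]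
  norm_num
  simp only [Matrix.trace, Matrix.mul_apply, Matrix.diag, Matrix.conjTranspose_apply,
    Complex.re_sum]
  rw [Finset.sum_comm]
  refine Finset.sum_congr rfl fun i _ => Finset.sum_congr rfl fun j _ => ?_
  rw [Complex.sq_norm]
  simp [Complex.normSq_apply, Complex.mul_re, Complex.star_def]

lemma norm_unitary_mul {n r m : ℕ} (U : Matrix (Fin n) (Fin r) ℂ) (hU : Uᴴ * U = 1)
    (X : Matrix (Fin r) (Fin m) ℂ) : ‖U * X‖ = ‖X‖ := by
  have h2 : ‖U * X‖ ^ 2 = ‖X‖ ^ 2 := by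
    rw [frob_sq, frob_sq, conjTranspose_mul, Matrix.mul_assoc, ← Matrix.mul_assoc Uᴴ, hU,
      Matrix.one_mul]
  exact le_antisymm
    (le_of_pow_le_pow_left₀ two_ne_zero (norm_nonneg _) h2.le)
    (le_of_pow_le_pow_left₀ two_ne_zero (norm_nonneg _) h2.ge)

lemma norm_conjT_mul_le {n r m : ℕ} (U : Matrix (Fin n) (Fin r) ℂ) (hU : Uᴴ * U = 1)
    (X : Matrix (Fin n) (Fin m) ℂ) : ‖Uᴴ * X‖ ≤ ‖X‖ := by
  have hU' : ∀ {k : ℕ} (Z : Matrix (Fin r) (Fin k) ℂ), Uᴴ * (U * Z) = Z := fun Z => by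
    rw [← Matrix.mul_assoc, hU, Matrix.one_mul]
  have key : ‖X‖ ^ 2 - ‖Uᴴ * X‖ ^ 2 = ‖X - U * (Uᴴ * X)‖ ^ 2 := by
    rw [frob_sq, frob_sq, frob_sq]
    have hexp : (X - U * (Uᴴ * X))ᴴ * (X - U * (Uᴴ * X)) =
        Xᴴ * X - (Uᴴ * X)ᴴ * (Uᴴ * X) := by
      simp only [conjTranspose_sub, conjTranspose_mul, Matrix.sub_mul, Matrix.mul_sub,
        conjTranspose_conjTranspose, Matrix.mul_assoc, hU']
      abel
    rw [hexp, trace_sub, Complex.sub_re]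
  have hsq : ‖Uᴴ * X‖ ^ 2 ≤ ‖X‖ ^ 2 := by nlinarith [sq_nonneg ‖X - U * (Uᴴ * X)‖]
  exact le_of_pow_le_pow_left₀ two_ne_zero (norm_nonneg _) hsq

/-- If `∇h(U) ≠ 0` and `∇h(U) = U_* P` is a polar decomposition, then
`‖U_* − U‖_F ≥ ‖grad h(U)‖_F / ((r+1)‖∇h(U)‖_F)`, where
`grad h(U) = ∇h(U) − U·sym(Uᴴ ∇h(U))` is the Riemannian gradient. -/
theorem polar_factor_step_lower_bound (n r : ℕ)
    (h : Matrix (Fin n) (Fin r) ℂ → ℝ)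
    (U G Ustar : Matrix (Fin n) (Fin r) ℂ) (P : Matrix (Fin r) (Fin r) ℂ)
    (hU : Uᴴ * U = 1)
    (hdiff : DifferentiableAt ℝ h U)
    (hgrad : ∀ Z, fderiv ℝ h U Z = ((Gᴴ * Z).trace).re)
    (hG : G ≠ 0)
    (hUstar : Ustarᴴ * Ustar = 1) (hP : P.PosSemidef) (hpolar : G = Ustar * P) :
    frobNorm (G - U * ((1 / 2 : ℂ) • (Uᴴ * G + Gᴴ * U))) /
        ((r + 1) * frobNorm G) ≤ frobNorm (Ustar - U) := by
  have hPh : Pᴴ = P := hP.1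
  set D : Matrix (Fin n) (Fin r) ℂ := Ustar - U with hD
  have hU' : ∀ {k : ℕ} (Z : Matrix (Fin r) (Fin k) ℂ), Uᴴ * (U * Z) = Z := fun Z => by
    rw [← Matrix.mul_assoc, hU, Matrix.one_mul]
  -- key algebraic identity
  have identity : G - U * ((1 / 2 : ℂ) • (Uᴴ * G + Gᴴ * U)) =
      D * P - (1 / 2 : ℂ) • (U * (Uᴴ * (D * P))) - (1 / 2 : ℂ) • (U * (P * (Dᴴ * U))) := by
    subst hpolar
    have hUstar' : Ustar = U + D := by rw [hD]; noncomm_ring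
    rw [hUstar']
    simp only [conjTranspose_mul, conjTranspose_add, hPh, Matrix.add_mul, Matrix.mul_add,
      Matrix.mul_smul, smul_add, Matrix.mul_assoc, hU', hU, Matrix.mul_one, Matrix.one_mul]
    module
  -- norms of pieces
  have hT1 : ‖U * (Uᴴ * (D * P))‖ ≤ ‖D‖ * ‖P‖ := by
    rw [norm_unitary_mul U hU]
    exact le_trans (norm_conjT_mul_le U hU _) (Matrix.frobenius_norm_mul D P)
  have hT2 : ‖U * (P * (Dᴴ * U))‖ ≤ ‖D‖ * ‖P‖ := by
    rw [norm_unitary_mul U hU]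
    have : (P * (Dᴴ * U))ᴴ = Uᴴ * (D * P) := by
      simp [conjTranspose_mul, hPh, Matrix.mul_assoc]
    calc ‖P * (Dᴴ * U)‖ = ‖(P * (Dᴴ * U))ᴴ‖ := (Matrix.frobenius_norm_conjTranspose _).symm
      _ = ‖Uᴴ * (D * P)‖ := by rw [this]
      _ ≤ ‖D * P‖ := norm_conjT_mul_le U hU _
      _ ≤ ‖D‖ * ‖P‖ := Matrix.frobenius_norm_mul D P
  have hPG : ‖P‖ = ‖G‖ := by rw [hpolar, norm_unitary_mul Ustar hUstar]
  have hbound : ‖G - U * ((1 / 2 : ℂ) • (Uᴴ * G + Gᴴ * U))‖ ≤ 2 * (‖D‖ * ‖G‖) := by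
    rw [identity, ← hPG]
    have half : ‖(1 / 2 : ℂ)‖ = 1 / 2 := by simp
    calc ‖D * P - (1 / 2 : ℂ) • (U * (Uᴴ * (D * P))) - (1 / 2 : ℂ) • (U * (P * (Dᴴ * U)))‖
        ≤ ‖D * P - (1 / 2 : ℂ) • (U * (Uᴴ * (D * P)))‖
            + ‖(1 / 2 : ℂ) • (U * (P * (Dᴴ * U)))‖ := norm_sub_le _ _
      _ ≤ ‖D * P‖ + ‖(1 / 2 : ℂ) • (U * (Uᴴ * (D * P)))‖
            + ‖(1 / 2 : ℂ) • (U * (P * (Dᴴ * U)))‖ := by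
            gcongr; exact norm_sub_le _ _
      _ = ‖D * P‖ + (1 / 2) * ‖U * (Uᴴ * (D * P))‖
            + (1 / 2) * ‖U * (P * (Dᴴ * U))‖ := by rw [norm_smul, norm_smul, half]
      _ ≤ ‖D‖ * ‖P‖ + (1 / 2) * (‖D‖ * ‖P‖) + (1 / 2) * (‖D‖ * ‖P‖) := by
            gcongr <;> first
              | exact Matrix.frobenius_norm_mul D P
              | exact hT1
              | exact hT2
      _ = 2 * (‖D‖ * ‖P‖) := by ring
  have hr : 1 ≤ r := by
    rcases Nat.eq_zero_or_pos r with hr0 | hr0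
    · exfalso; apply hG; subst hr0; ext i j; exact j.elim0
    · exact hr0
  have hGpos : (0 : ℝ) < ‖G‖ := norm_pos_iff.mpr hG
  rw [frobNorm_eq_norm, frobNorm_eq_norm, frobNorm_eq_norm,
    div_le_iff₀ (by positivity)]
  have hr' : (2 : ℝ) ≤ (r : ℝ) + 1 := by exact_mod_cast Nat.succ_le_succ hr
  nlinarith [norm_nonneg D, hbound, mul_nonneg (norm_nonneg D) hGpos.le]
end

section
/- Let h : St(r,n,ℂ) → ℝ be twice continuously differentiable and scale invariant, i.e. h(UR) = h(U) for every diagonal unitary matrix R ∈ DU_r. If U is a stationary point of h (grad h(U) = 0), then for each 1 ≤ p ≤ r the tangent vector Z_p = i·U e_p e_p^T satisfies Hess h(U)[Z_p] = 0. Consequently rank(Hess h(U)) ≤ 2nr − r² − r. -/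
open Matrix

noncomputable section

/-- Hermitian part `sym(A) = (A + Aᴴ)/2`. -/
def symPart {r : ℕ} (A : Matrix (Fin r) (Fin r) ℂ) : Matrix (Fin r) (Fin r) ℂ :=
  (1 / 2 : ℂ) • (A + Aᴴ)

/-- Projection onto the tangent space of the Stiefel manifold at `U`. -/
def stiefelProj {n r : ℕ} (U Z : Matrix (Fin n) (Fin r) ℂ) : Matrix (Fin n) (Fin r) ℂ :=
  Z - U * symPart (Uᴴ * Z)

/-- Weingarten operator of the Stiefel manifold. -/
def weingarten {n r : ℕ} (U Z V : Matrix (Fin n) (Fin r) ℂ) : Matrix (Fin n) (Fin r) ℂ :=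
  -(Z * (Uᴴ * V)) - U * symPart (Zᴴ * V)

/-- The tangent space to the Stiefel manifold at `U`, as a real submodule of
`ℂ^{n×r}`. -/
def stiefelTangent {n r : ℕ} (U : Matrix (Fin n) (Fin r) ℂ) :
    Submodule ℝ (Matrix (Fin n) (Fin r) ℂ) where
  carrier := {Z | Uᴴ * Z + Zᴴ * U = 0}
  zero_mem' := by simp
  add_mem' := by
    intro a b ha hb
    simp only [Set.mem_setOf_eq] at ha hb ⊢
    have : Uᴴ * (a + b) + (a + b)ᴴ * U = (Uᴴ * a + aᴴ * U) + (Uᴴ * b + bᴴ * U) := by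
      rw [Matrix.conjTranspose_add, Matrix.mul_add, Matrix.add_mul]; abel
    rw [this, ha, hb, add_zero]
  smul_mem' := by
    intro c Z hZ
    simp only [Set.mem_setOf_eq] at hZ ⊢
    have : Uᴴ * (c • Z) + (c • Z)ᴴ * U = c • (Uᴴ * Z + Zᴴ * U) := by
      rw [Matrix.conjTranspose_smul, star_trivial, Matrix.mul_smul, Matrix.smul_mul, smul_add]
    rw [this, hZ, smul_zero]

attribute [local instance] Matrix.frobeniusNormedAddCommGroup Matrix.frobeniusNormedSpace

namespace SIH
variable {n r : ℕ}

lemma trace_mul_std (M : Matrix (Fin r) (Fin n) ℂ) (a : Fin n) (b : Fin r) (c : ℂ) :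
    (M * Matrix.single a b c).trace = M b a * c := by
  classical
  simp [Matrix.trace, Matrix.diag, Matrix.mul_apply, Matrix.single, Matrix.of_apply,
    mul_ite, ite_and, Finset.sum_ite_eq, Finset.sum_ite_eq']

lemma ext_of_re_trace (A B : Matrix (Fin n) (Fin r) ℂ)
    (hAB : ∀ Z : Matrix (Fin n) (Fin r) ℂ, ((Aᴴ * Z).trace).re = ((Bᴴ * Z).trace).re) : A = B := by
  ext a b
  have h1 := hAB (Matrix.single a b 1)
  have h2 := hAB (Matrix.single a b Complex.I)
  rw [trace_mul_std, trace_mul_std] at h1 h2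
  simp [Matrix.conjTranspose_apply, Complex.ext_iff, Complex.mul_re, Complex.mul_im] at h1 h2 ⊢
  constructor <;> linarith

lemma finrank_mat (a b : ℕ) : Module.finrank ℝ (Matrix (Fin a) (Fin b) ℂ) = 2 * a * b := by
  rw [← (Matrix.ofLinearEquiv ℝ).finrank_eq]
  simp [Module.finrank_pi_fintype, Complex.finrank_real_complex, Finset.sum_const]
  ring

lemma diag_unitary_mul (R : Matrix (Fin r) (Fin r) ℂ)
    (hdiag : ∀ p q, p ≠ q → R p q = 0) (habs : ∀ p, ‖R p p‖ = 1) :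
    Rᴴ * R = 1 := by
  ext p q
  rcases eq_or_ne p q with rfl | hpq
  · rw [Matrix.mul_apply, Finset.sum_eq_single p]
    · rw [Matrix.conjTranspose_apply, Matrix.one_apply_eq,
        show (star (R p p) : ℂ) = (starRingEnd ℂ) (R p p) from rfl,
        ← Complex.normSq_eq_conj_mul_self, Complex.normSq_eq_norm_sq, habs, one_pow,
        Complex.ofReal_one]
    · intro k _ hk
      rw [Matrix.conjTranspose_apply, hdiag k p hk, star_zero, zero_mul]
    · simp
  · rw [Matrix.mul_apply, Matrix.one_apply_ne hpq]
    apply Finset.sum_eq_zero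
    intro k _
    rcases eq_or_ne k q with rfl | hkq
    · rw [Matrix.conjTranspose_apply, hdiag k p (Ne.symm hpq), star_zero, zero_mul]
    · rw [hdiag k q hkq, mul_zero]

lemma stdBasis_conjTranspose (p : Fin r) :
    (Matrix.single p p (1 : ℂ))ᴴ = Matrix.single p p (1 : ℂ) := by
  ext i j
  simp [Matrix.conjTranspose_apply, Matrix.single, and_comm, apply_ite]

lemma mul_std_apply (M : Matrix (Fin n) (Fin r) ℂ) (i j : Fin r) (c : ℂ) (a : Fin n) (b : Fin r) :
    (M * Matrix.single i j c) a b = if j = b then M a i * c else 0 := by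
  classical
  simp [Matrix.mul_apply, Matrix.single, mul_ite, ite_and, Finset.sum_ite_eq,
    Finset.sum_ite_eq']

lemma key_alg (U : Matrix (Fin n) (Fin r) ℂ) (S E : Matrix (Fin r) (Fin r) ℂ)
    (hU : Uᴴ * U = 1) (hS : Sᴴ = S) (hE : Eᴴ = E) :
    stiefelProj U (Complex.I • (U * S * E)) + weingarten U (Complex.I • (U * E)) (U * S) = 0 := by
  have hUU : ∀ X : Matrix (Fin r) (Fin r) ℂ, Uᴴ * (U * X) = X := fun X => by
    rw [← Matrix.mul_assoc, hU, Matrix.one_mul]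
  simp only [stiefelProj, weingarten, symPart, Matrix.mul_smul, Matrix.smul_mul,
    Matrix.conjTranspose_smul, Matrix.conjTranspose_mul, Matrix.conjTranspose_conjTranspose,
    Matrix.conjTranspose_neg, hS, hE, Matrix.mul_assoc, hUU, Complex.star_def, Complex.conj_I,
    Matrix.mul_add, smul_add, Matrix.add_mul, neg_smul, Matrix.neg_mul, Matrix.mul_neg, smul_neg]
  module

lemma grad_equivariant (h : Matrix (Fin n) (Fin r) ℂ → ℝ)
    (g : Matrix (Fin n) (Fin r) ℂ → Matrix (Fin n) (Fin r) ℂ)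
    (hdiff : Differentiable ℝ h)
    (hg : ∀ U Z, fderiv ℝ h U Z = (((g U)ᴴ * Z).trace).re)
    (hinv : ∀ (W : Matrix (Fin n) (Fin r) ℂ) (R : Matrix (Fin r) (Fin r) ℂ),
      (∀ p q, p ≠ q → R p q = 0) → (∀ p, ‖R p p‖ = 1) → h (W * R) = h W)
    (W : Matrix (Fin n) (Fin r) ℂ) (R : Matrix (Fin r) (Fin r) ℂ)
    (hdiag : ∀ p q, p ≠ q → R p q = 0) (habs : ∀ p, ‖R p p‖ = 1) :
    g (W * R) = g W * R := by
  have hRR : Rᴴ * R = 1 := diag_unitary_mul R hdiag habs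
  let L : Matrix (Fin n) (Fin r) ℂ →ₗ[ℝ] Matrix (Fin n) (Fin r) ℂ :=
    { toFun := fun Z => Z * R
      map_add' := fun a b => Matrix.add_mul a b R
      map_smul' := fun c a => by simp [Matrix.smul_mul] }
  have key : ∀ Z, fderiv ℝ h W Z = fderiv ℝ h (W * R) (Z * R) := by
    intro Z
    have hcomp : fderiv ℝ (fun W' => h (W' * R)) W
        = (fderiv ℝ h (W * R)).comp (L.toContinuousLinearMap : _ →L[ℝ] _) := by
      exact (((hdiff (W * R)).hasFDerivAt).comp W
        (L.toContinuousLinearMap.hasFDerivAt : HasFDerivAt (fun Z => Z * R) _ W)).fderiv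
    have heq : (fun W' => h (W' * R)) = h := funext fun W' => hinv W' R hdiag habs
    calc fderiv ℝ h W Z = fderiv ℝ (fun W' => h (W' * R)) W Z := by rw [heq]
    _ = fderiv ℝ h (W * R) (Z * R) := by rw [hcomp]; rfl
  have hGW : g W = g (W * R) * Rᴴ := by
    apply ext_of_re_trace
    intro Z
    have hk := key Z
    rw [hg, hg] at hk
    rw [hk]
    congr 1
    rw [Matrix.conjTranspose_mul, Matrix.conjTranspose_conjTranspose,
      ← Matrix.mul_assoc, Matrix.trace_mul_cycle]
  calc g (W * R) = g (W * R) * (Rᴴ * R) := by rw [hRR, Matrix.mul_one]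
  _ = (g (W * R) * Rᴴ) * R := by rw [Matrix.mul_assoc]
  _ = g W * R := by rw [← hGW]

lemma fderiv_g_Zp
    (g : Matrix (Fin n) (Fin r) ℂ → Matrix (Fin n) (Fin r) ℂ)
    (hgdiff : Differentiable ℝ g)
    (U : Matrix (Fin n) (Fin r) ℂ) {p : Fin r}
    (hgc : ∀ t : ℝ, g (U + (Complex.exp (t * Complex.I) - 1) • (U * Matrix.single p p (1:ℂ)))
      = g U + (Complex.exp (t * Complex.I) - 1) • (g U * Matrix.single p p (1:ℂ))) :
    fderiv ℝ g U (Complex.I • (U * Matrix.single p p (1:ℂ)))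
      = Complex.I • (g U * Matrix.single p p (1:ℂ)) := by
  set E := Matrix.single p p (1:ℂ) with hEdef
  have hd1 : HasDerivAt (fun t : ℝ => Complex.exp (↑t * Complex.I) - 1) Complex.I 0 := by
    have h0 : HasDerivAt (fun t : ℝ => (↑t * Complex.I : ℂ)) Complex.I 0 := by
      simpa using (Complex.ofRealCLM.hasDerivAt (x := (0:ℝ))).mul_const Complex.I
    simpa using (h0.cexp).sub_const 1
  have hc : HasDerivAt (fun t : ℝ => U + (Complex.exp (↑t * Complex.I) - 1) • (U * E))
      (Complex.I • (U * E)) 0 := (hd1.smul_const (U * E)).const_add U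
  have hc0 : U + (Complex.exp ((0:ℝ) * Complex.I) - 1) • (U * E) = U := by simp
  have hgU : HasFDerivAt g (fderiv ℝ g U)
      (U + (Complex.exp ((0:ℝ) * Complex.I) - 1) • (U * E)) := by
    rw [hc0]; exact (hgdiff U).hasFDerivAt
  have hco : HasDerivAt (fun t : ℝ => g (U + (Complex.exp (↑t * Complex.I) - 1) • (U * E)))
      (fderiv ℝ g U (Complex.I • (U * E))) 0 := hgU.comp_hasDerivAt 0 hc
  have hrhs : HasDerivAt (fun t : ℝ => g U + (Complex.exp (↑t * Complex.I) - 1) • (g U * E))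
      (Complex.I • (g U * E)) 0 := (hd1.smul_const (g U * E)).const_add (g U)
  have hfe : (fun t : ℝ => g (U + (Complex.exp (↑t * Complex.I) - 1) • (U * E)))
      = (fun t : ℝ => g U + (Complex.exp (↑t * Complex.I) - 1) • (g U * E)) :=
    funext fun t => hgc t
  rw [hfe] at hco
  exact hco.unique hrhs

/-- `Φ` -/
def sphi (U : Matrix (Fin n) (Fin r) ℂ) :
    Matrix (Fin n) (Fin r) ℂ →ₗ[ℝ] Matrix (Fin r) (Fin r) ℂ where
  toFun Z := Uᴴ * Z + Zᴴ * U
  map_add' a b := by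
    show Uᴴ * (a + b) + (a + b)ᴴ * U = Uᴴ * a + aᴴ * U + (Uᴴ * b + bᴴ * U)
    rw [Matrix.conjTranspose_add, Matrix.mul_add, Matrix.add_mul]; abel
  map_smul' c Z := by
    simp only [RingHom.id_apply]
    rw [Matrix.conjTranspose_smul, star_trivial, Matrix.mul_smul, Matrix.smul_mul, smul_add]

/-- `Ψ` -/
def spsi : Matrix (Fin r) (Fin r) ℂ →ₗ[ℝ] Matrix (Fin r) (Fin r) ℂ where
  toFun H := H + Hᴴ
  map_add' a b := by
    show a + b + (a + b)ᴴ = a + aᴴ + (b + bᴴ)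
    rw [Matrix.conjTranspose_add]; abel
  map_smul' c H := by
    simp only [RingHom.id_apply]
    rw [Matrix.conjTranspose_smul, star_trivial, smul_add]

lemma ker_sphi (U : Matrix (Fin n) (Fin r) ℂ) :
    LinearMap.ker (sphi U) = stiefelTangent U := rfl

/-- multiplication by `i` as a real-linear equivalence -/
def mulI : Matrix (Fin r) (Fin r) ℂ ≃ₗ[ℝ] Matrix (Fin r) (Fin r) ℂ where
  toFun x := Complex.I • x
  invFun x := (-Complex.I) • x
  map_add' := smul_add _
  map_smul' c x := smul_comm _ _ _
  left_inv x := by simp [smul_smul]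
  right_inv x := by simp [smul_smul]

lemma map_ker_spsi :
    (LinearMap.ker (spsi (r := r))).map (mulI.toLinearMap) = LinearMap.range (spsi (r := r)) := by
  ext y
  simp only [Submodule.mem_map, LinearMap.mem_ker, LinearMap.mem_range]
  constructor
  · rintro ⟨x, hx, rfl⟩
    refine ⟨(Complex.I / 2) • x, ?_⟩
    have hxh : xᴴ = -x := eq_neg_of_add_eq_zero_right hx
    show (Complex.I / 2) • x + ((Complex.I / 2) • x)ᴴ = mulI x
    rw [Matrix.conjTranspose_smul, hxh]
    show _ = Complex.I • x
    have : (star (Complex.I / 2) : ℂ) = -(Complex.I / 2) := by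
      simp [Complex.star_def, map_div₀, Complex.conj_I, neg_div]
    rw [this]
    module
  · rintro ⟨H, rfl⟩
    have hy : (H + Hᴴ)ᴴ = H + Hᴴ := by
      rw [Matrix.conjTranspose_add, Matrix.conjTranspose_conjTranspose, add_comm]
    refine ⟨(-Complex.I) • (H + Hᴴ), ?_, ?_⟩
    · show (-Complex.I) • (H + Hᴴ) + ((-Complex.I) • (H + Hᴴ))ᴴ = 0
      rw [Matrix.conjTranspose_smul, hy]
      have : (star (-Complex.I) : ℂ) = Complex.I := by simp
      rw [this]
      module
    · show Complex.I • ((-Complex.I) • (H + Hᴴ)) = H + Hᴴ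
      rw [smul_smul]
      simp

lemma finrank_range_spsi : Module.finrank ℝ (LinearMap.range (spsi (r := r))) = r ^ 2 := by
  have h1 : Module.finrank ℝ (LinearMap.ker (spsi (r := r)))
      = Module.finrank ℝ (LinearMap.range (spsi (r := r))) := by
    rw [← map_ker_spsi]
    exact (LinearEquiv.finrank_map_eq mulI _).symm
  have h2 := LinearMap.finrank_range_add_finrank_ker (spsi (r := r))
  rw [finrank_mat r r, show 2 * r * r = 2 * r ^ 2 by ring] at h2
  omega

lemma finrank_tangent_le (U : Matrix (Fin n) (Fin r) ℂ) (hU : Uᴴ * U = 1) :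
    Module.finrank ℝ (stiefelTangent U) + r ^ 2 ≤ 2 * n * r := by
  have hle : LinearMap.range (spsi (r := r)) ≤ LinearMap.range (sphi U) := by
    rintro y ⟨H, rfl⟩
    refine ⟨U * H, ?_⟩
    show Uᴴ * (U * H) + (U * H)ᴴ * U = H + Hᴴ
    rw [← Matrix.mul_assoc, hU, Matrix.one_mul, Matrix.conjTranspose_mul, Matrix.mul_assoc, hU,
      Matrix.mul_one]
  have h2 := LinearMap.finrank_range_add_finrank_ker (sphi U)
  rw [finrank_mat n r, ker_sphi] at h2
  have h3 : r ^ 2 ≤ Module.finrank ℝ (LinearMap.range (sphi U)) := by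
    rw [← finrank_range_spsi (r := r)]
    exact Submodule.finrank_mono hle
  omega

lemma aux_rank_bound {k : ℕ} {V : Type*} [AddCommGroup V] [Module ℝ V] [FiniteDimensional ℝ V]
    (f : V →ₗ[ℝ] V) (T : Submodule ℝ V) (v : Fin k → V)
    (hv : LinearIndependent ℝ v) (hvT : ∀ p, v p ∈ T) (hvf : ∀ p, f (v p) = 0) :
    Module.finrank ℝ (LinearMap.range (f.domRestrict T)) + k ≤ Module.finrank ℝ T := by
  set D := f.domRestrict T with hD
  have hmemker : ∀ p, (⟨v p, hvT p⟩ : T) ∈ LinearMap.ker D := by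
    intro p
    rw [LinearMap.mem_ker, hD, LinearMap.domRestrict_apply]
    exact hvf p
  have hw : LinearIndependent ℝ (fun p => (⟨⟨v p, hvT p⟩, hmemker p⟩ : LinearMap.ker D)) := by
    apply LinearIndependent.of_comp (T.subtype.comp (LinearMap.ker D).subtype)
    exact hv
  have hcard := hw.fintype_card_le_finrank
  rw [Fintype.card_fin] at hcard
  have hrn := LinearMap.finrank_range_add_finrank_ker D
  omega

end SIH

set_option maxHeartbeats 1000000 in
set_option synthInstance.maxHeartbeats 400000 in
/-- If `h` is scale invariant (invariant under right multiplication by diagonal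
unitary matrices) and `U` is a stationary point, then each tangent vector
`Z_p = i·U e_p e_pᵀ` lies in the kernel of the Riemannian Hessian
`𝓗[Z] = Proj_U(∇²h(U)[Z]) + A_U(Z, Proj⊥_U ∇h(U))`; consequently the rank of
the Hessian on the tangent space is at most `2nr − r² − r`. -/
theorem scale_invariant_hessian_degenerate (n r : ℕ)
    (h : Matrix (Fin n) (Fin r) ℂ → ℝ)
    (g : Matrix (Fin n) (Fin r) ℂ → Matrix (Fin n) (Fin r) ℂ)
    (hsmooth : ContDiff ℝ 2 h)
    (hg : ∀ U Z, fderiv ℝ h U Z = (((g U)ᴴ * Z).trace).re)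
    (hgdiff : Differentiable ℝ g)
    (U : Matrix (Fin n) (Fin r) ℂ) (hU : Uᴴ * U = 1)
    (hinv : ∀ (W : Matrix (Fin n) (Fin r) ℂ) (R : Matrix (Fin r) (Fin r) ℂ),
      (∀ p q, p ≠ q → R p q = 0) → (∀ p, ‖R p p‖ = 1) → h (W * R) = h W)
    (hstat : g U - U * symPart (Uᴴ * g U) = 0)
    (𝓗 : Matrix (Fin n) (Fin r) ℂ →ₗ[ℝ] Matrix (Fin n) (Fin r) ℂ)
    (h𝓗 : ∀ Z, 𝓗 Z =
      stiefelProj U (fderiv ℝ g U Z) + weingarten U Z (U * symPart (Uᴴ * g U))) :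
    (∀ p : Fin r, 𝓗 (Complex.I • (U * Matrix.single p p (1 : ℂ))) = 0) ∧
      Module.finrank ℝ ↥(LinearMap.range (𝓗.domRestrict (stiefelTangent U))) ≤
        2 * n * r - r ^ 2 - r := by
  classical
  have hgU : g U = U * symPart (Uᴴ * g U) := sub_eq_zero.mp hstat
  have hSsym : (symPart (Uᴴ * g U))ᴴ = symPart (Uᴴ * g U) := by
    unfold symPart
    rw [Matrix.conjTranspose_smul, Matrix.conjTranspose_add,
      Matrix.conjTranspose_conjTranspose]
    have : (star (1/2 : ℂ)) = (1/2 : ℂ) := by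
      simp [Complex.star_def, map_div₀]
    rw [this, add_comm]
  -- part 1
  have part1 : ∀ p : Fin r, 𝓗 (Complex.I • (U * Matrix.single p p (1 : ℂ))) = 0 := by
    intro p
    set E := Matrix.single p p (1:ℂ) with hEdef
    have hgc : ∀ t : ℝ,
        g (U + (Complex.exp (t * Complex.I) - 1) • (U * E))
          = g U + (Complex.exp (t * Complex.I) - 1) • (g U * E) := by
      intro t
      set z : ℂ := Complex.exp (t * Complex.I) - 1 with hz
      have hdiagR : ∀ p' q', p' ≠ q' →
          ((1 : Matrix (Fin r) (Fin r) ℂ) + z • E) p' q' = 0 := by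
        intro p' q' hne
        have hE0 : E p' q' = 0 := by
          apply Matrix.single_apply_of_ne
          rintro ⟨rfl, rfl⟩; exact hne rfl
        simp [Matrix.add_apply, Matrix.one_apply_ne hne, Matrix.smul_apply, hE0]
      have habsR : ∀ q, ‖(((1 : Matrix (Fin r) (Fin r) ℂ) + z • E) q q)‖ = 1 := by
        intro q
        by_cases hq : p = q
        · subst hq
          have hE1 : E p p = 1 := Matrix.single_apply_same p p 1
          simp only [Matrix.add_apply, Matrix.one_apply_eq, Matrix.smul_apply, hE1,
            smul_eq_mul, mul_one, hz]
          rw [show (1 : ℂ) + (Complex.exp (↑t * Complex.I) - 1)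
            = Complex.exp (↑t * Complex.I) by ring]
          rw [Complex.norm_exp]
          simp
        · have hE0 : E q q = 0 := by
            apply Matrix.single_apply_of_ne
            intro hh; exact hq hh.1
          simp [Matrix.add_apply, Matrix.one_apply_eq, Matrix.smul_apply, hE0]
      have hequiv := SIH.grad_equivariant h g (hsmooth.differentiable (by norm_num)) hg hinv U
        ((1 : Matrix (Fin r) (Fin r) ℂ) + z • E) hdiagR habsR
      rw [Matrix.mul_add, Matrix.mul_one, Matrix.mul_smul, Matrix.mul_add, Matrix.mul_one,
        Matrix.mul_smul] at hequiv
      exact hequiv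
    have hfd := SIH.fderiv_g_Zp g hgdiff U (p := p) hgc
    have hfd2 : fderiv ℝ g U (Complex.I • (U * E))
        = Complex.I • (U * symPart (Uᴴ * g U) * E) := by
      rw [hfd]; conv_lhs => rw [hgU]
    rw [h𝓗, hfd2]
    exact SIH.key_alg U (symPart (Uᴴ * g U)) E hU hSsym (SIH.stdBasis_conjTranspose p)
  refine ⟨part1, ?_⟩
  -- part 2
  have hmem : ∀ p : Fin r,
      (Complex.I • (U * Matrix.single p p (1:ℂ))) ∈ stiefelTangent U := by
    intro p
    show Uᴴ * (Complex.I • (U * Matrix.single p p (1:ℂ)))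
      + (Complex.I • (U * Matrix.single p p (1:ℂ)))ᴴ * U = 0
    rw [Matrix.mul_smul, ← Matrix.mul_assoc, hU, Matrix.one_mul, Matrix.conjTranspose_smul,
      Matrix.conjTranspose_mul, Matrix.smul_mul, Matrix.mul_assoc, hU, Matrix.mul_one,
      SIH.stdBasis_conjTranspose p]
    simp [Complex.star_def, Complex.conj_I]
  have hindep : LinearIndependent ℝ
      (fun p : Fin r => Complex.I • (U * Matrix.single p p (1:ℂ))) := by
    rw [Fintype.linearIndependent_iff]
    intro gc hgc p
    have hex : ∃ a, U a p ≠ 0 := by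
      by_contra hall
      push_neg at hall
      have h1 := congrFun (congrFun hU p) p
      rw [Matrix.mul_apply] at h1
      simp [Matrix.conjTranspose_apply, hall] at h1
    obtain ⟨a, ha⟩ := hex
    have h2 : (∑ q : Fin r, gc q • (Complex.I • (U * Matrix.single q q (1:ℂ)))) a p
        = 0 := by rw [hgc]; rfl
    rw [Matrix.sum_apply] at h2
    simp only [Matrix.smul_apply, SIH.mul_std_apply, smul_ite, smul_zero] at h2
    rw [Finset.sum_ite_eq' Finset.univ p] at h2
    simp only [Finset.mem_univ, if_true, mul_one, smul_eq_mul] at h2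
    rcases smul_eq_zero.mp h2 with h3 | h3
    · exact h3
    · rcases mul_eq_zero.mp h3 with h4 | h4
      · exact absurd h4 Complex.I_ne_zero
      · exact absurd h4 ha
  have hbound := SIH.aux_rank_bound 𝓗 (stiefelTangent U)
    (fun p : Fin r => Complex.I • (U * Matrix.single p p (1:ℂ))) hindep hmem part1
  have hT := SIH.finrank_tangent_le U hU
  omega

end
end

section
/- Let h : St(r,n,ℂ) → ℝ be twice continuously differentiable and unitarily invariant, i.e. h(UR) = h(U) for every R ∈ U(r). If U is a stationary point of h, then for all 1 ≤ p < q ≤ r the tangent vectors Z_{p,q} = i·U(e_p e_q^T + e_q e_p^T) and Z'_{p,q} = U(e_p e_q^T − e_q e_p^T) lie in the kernel of the Riemannian Hessian of h at U. Consequently rank(Hess h(U)) ≤ 2r(n−r). -/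
open Matrix

noncomputable section

attribute [local instance] Matrix.frobeniusNormedAddCommGroup Matrix.frobeniusNormedSpace

/-! ### Auxiliary lemmas -/

lemma stdBasis_conjT {r : ℕ} (p q : Fin r) :
    (Matrix.single p q (1:ℂ))ᴴ = Matrix.single q p 1 := by
  ext a b
  simp only [Matrix.conjTranspose_apply, Matrix.single, Matrix.of_apply]
  split <;> split <;> simp_all

section basisfacts
variable {r : ℕ} {p q : Fin r}

private lemma mqp (hpq : p ≠ q) : ∀ (a f : Fin r) (c d : ℂ),
    Matrix.single a q c * Matrix.single p f d = 0 :=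
  fun a f c d => Matrix.single_mul_single_of_ne (c := c) a q p hpq.symm d

private lemma mpq (hpq : p ≠ q) : ∀ (a f : Fin r) (c d : ℂ),
    Matrix.single a p c * Matrix.single q f d = 0 :=
  fun a f c d => Matrix.single_mul_single_of_ne (c := c) a p q hpq d

lemma bI_sq (hpq : p ≠ q) :
    (Complex.I • (Matrix.single p q (1:ℂ) + Matrix.single q p 1)) *
      (Complex.I • (Matrix.single p q (1:ℂ) + Matrix.single q p 1))
    = -(Matrix.single p p (1:ℂ) + Matrix.single q q 1) := by
  simp only [Matrix.smul_mul, Matrix.mul_smul, smul_smul, Complex.I_mul_I,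
    Matrix.add_mul, Matrix.mul_add, Matrix.single_mul_single_same, mqp hpq, mpq hpq,
    mul_one, one_mul, add_zero, zero_add, smul_add, neg_smul, one_smul]
  abel

lemma bS_sq (hpq : p ≠ q) :
    (Matrix.single p q (1:ℂ) - Matrix.single q p 1) *
      (Matrix.single p q (1:ℂ) - Matrix.single q p 1)
    = -(Matrix.single p p (1:ℂ) + Matrix.single q q 1) := by
  simp only [Matrix.sub_mul, Matrix.mul_sub, Matrix.single_mul_single_same, mqp hpq, mpq hpq,
    mul_one, one_mul, sub_zero, zero_sub]
  abel

lemma bD_sq (p : Fin r) :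
    (Complex.I • Matrix.single p p (1:ℂ)) *
      (Complex.I • Matrix.single p p (1:ℂ)) = -(Matrix.single p p (1:ℂ)) := by
  simp only [Matrix.smul_mul, Matrix.mul_smul, smul_smul, Complex.I_mul_I,
    Matrix.single_mul_single_same, mul_one, neg_smul, one_smul]

lemma bP_sq (hpq : p ≠ q) :
    ((Matrix.single p p (1:ℂ) + Matrix.single q q 1) :
        Matrix (Fin r) (Fin r) ℂ) *
      (Matrix.single p p (1:ℂ) + Matrix.single q q 1)
    = Matrix.single p p (1:ℂ) + Matrix.single q q 1 := by
  simp only [Matrix.add_mul, Matrix.mul_add, Matrix.single_mul_single_same, mqp hpq, mpq hpq,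
    mul_one, add_zero, zero_add]

lemma bDP_sq (p : Fin r) :
    (Matrix.single p p (1:ℂ)) * (Matrix.single p p (1:ℂ))
      = Matrix.single p p (1:ℂ) := by
  simp only [Matrix.single_mul_single_same, mul_one]

lemma bI_P (hpq : p ≠ q) :
    (Complex.I • (Matrix.single p q (1:ℂ) + Matrix.single q p 1)) *
      (Matrix.single p p (1:ℂ) + Matrix.single q q 1)
    = Complex.I • (Matrix.single p q (1:ℂ) + Matrix.single q p 1) := by
  simp only [Matrix.smul_mul, Matrix.add_mul, Matrix.mul_add,
    Matrix.single_mul_single_same, mqp hpq, mpq hpq, mul_one, add_zero, zero_add]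
  simp only [smul_add]
  abel

lemma bP_I (hpq : p ≠ q) :
    ((Matrix.single p p (1:ℂ) + Matrix.single q q 1)) *
      (Complex.I • (Matrix.single p q (1:ℂ) + Matrix.single q p 1))
    = Complex.I • (Matrix.single p q (1:ℂ) + Matrix.single q p 1) := by
  simp only [Matrix.mul_smul, Matrix.add_mul, Matrix.mul_add,
    Matrix.single_mul_single_same, mqp hpq, mpq hpq, mul_one, one_mul, add_zero, zero_add]

lemma bS_P (hpq : p ≠ q) :
    (Matrix.single p q (1:ℂ) - Matrix.single q p 1) *
      (Matrix.single p p (1:ℂ) + Matrix.single q q 1)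
    = Matrix.single p q (1:ℂ) - Matrix.single q p 1 := by
  simp only [Matrix.sub_mul, Matrix.add_mul, Matrix.mul_add, Matrix.mul_sub,
    Matrix.single_mul_single_same, mqp hpq, mpq hpq,
    mul_one, add_zero, zero_add, zero_sub, sub_zero]
  abel

lemma bP_S (hpq : p ≠ q) :
    ((Matrix.single p p (1:ℂ) + Matrix.single q q 1)) *
      (Matrix.single p q (1:ℂ) - Matrix.single q p 1)
    = Matrix.single p q (1:ℂ) - Matrix.single q p 1 := by
  simp only [Matrix.sub_mul, Matrix.add_mul, Matrix.mul_add, Matrix.mul_sub,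
    Matrix.single_mul_single_same, mqp hpq, mpq hpq,
    mul_one, one_mul, add_zero, zero_add, zero_sub, sub_zero]

lemma bD_P (p : Fin r) :
    (Complex.I • Matrix.single p p (1:ℂ)) * (Matrix.single p p (1:ℂ))
      = Complex.I • Matrix.single p p (1:ℂ) := by
  simp only [Matrix.smul_mul, Matrix.single_mul_single_same, mul_one]

lemma bP_D (p : Fin r) :
    (Matrix.single p p (1:ℂ)) * (Complex.I • Matrix.single p p (1:ℂ))
      = Complex.I • Matrix.single p p (1:ℂ) := by
  simp only [Matrix.mul_smul, Matrix.single_mul_single_same, one_mul]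

lemma bI_skew (p q : Fin r) :
    (Complex.I • (Matrix.single p q (1:ℂ) + Matrix.single q p 1))ᴴ
      = -(Complex.I • (Matrix.single p q (1:ℂ) + Matrix.single q p 1)) := by
  rw [Matrix.conjTranspose_smul, Matrix.conjTranspose_add, stdBasis_conjT, stdBasis_conjT]
  simp [add_comm]

lemma bS_skew (p q : Fin r) :
    ((Matrix.single p q (1:ℂ) - Matrix.single q p 1) :
        Matrix (Fin r) (Fin r) ℂ)ᴴ
      = -(Matrix.single p q (1:ℂ) - Matrix.single q p 1) := by
  rw [Matrix.conjTranspose_sub, stdBasis_conjT, stdBasis_conjT]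
  abel

lemma bD_skew (p : Fin r) :
    (Complex.I • Matrix.single p p (1:ℂ))ᴴ
      = -(Complex.I • Matrix.single p p (1:ℂ)) := by
  rw [Matrix.conjTranspose_smul, stdBasis_conjT]
  simp

lemma bP_herm (p q : Fin r) :
    ((Matrix.single p p (1:ℂ) + Matrix.single q q 1) :
        Matrix (Fin r) (Fin r) ℂ)ᴴ
      = Matrix.single p p (1:ℂ) + Matrix.single q q 1 := by
  rw [Matrix.conjTranspose_add, stdBasis_conjT, stdBasis_conjT]

end basisfacts

lemma double_sum_ite {r : ℕ} {M : Type*} [AddCommMonoid M] (f : Fin r → Fin r → M) (a b : Fin r) :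
    (∑ p : Fin r, ∑ q : Fin r, if p = a ∧ q = b then f p q else 0) = f a b := by
  rw [Finset.sum_eq_single a]
  · rw [Finset.sum_eq_single b]
    · simp
    · intro c _ hc; simp [hc]
    · simp
  · intro c _ hc
    apply Finset.sum_eq_zero
    intro d _; simp [hc]
  · simp

lemma double_sum_ite' {r : ℕ} {M : Type*} [AddCommMonoid M] (f : Fin r → Fin r → M) (a b : Fin r) :
    (∑ p : Fin r, ∑ q : Fin r, if q = a ∧ p = b then f p q else 0) = f b a := by
  rw [Finset.sum_comm]
  exact double_sum_ite (fun q p => f p q) a b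

lemma skew_decomp {r : ℕ} (Ω : Matrix (Fin r) (Fin r) ℂ) (hΩ : Ωᴴ = -Ω) :
    Ω = (1/2 : ℝ) • ∑ p : Fin r, ∑ q : Fin r,
      ((Ω p q).re • (Matrix.single p q (1:ℂ) - Matrix.single q p (1:ℂ)) +
       (Ω p q).im • (Complex.I • (Matrix.single p q (1:ℂ) +
          Matrix.single q p (1:ℂ)))) := by
  have hskew : ∀ a b, Ω b a = -(starRingEnd ℂ) (Ω a b) := by
    intro a b
    have h1 := congrFun (congrFun hΩ a) b
    simp only [Matrix.conjTranspose_apply, Matrix.neg_apply] at h1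
    have h2 := congrArg (starRingEnd ℂ) h1
    simpa using h2
  ext a b
  have expand : ∀ p q : Fin r,
      (((Ω p q).re • (Matrix.single p q (1:ℂ) - Matrix.single q p (1:ℂ)) +
       (Ω p q).im • (Complex.I • (Matrix.single p q (1:ℂ) +
          Matrix.single q p (1:ℂ)))) a b)
      = (if p = a ∧ q = b then ((Ω p q).re : ℂ) + (Ω p q).im * Complex.I else 0)
        + (if q = a ∧ p = b then -((Ω p q).re : ℂ) + (Ω p q).im * Complex.I else 0) := by
    intro p q
    simp only [Matrix.add_apply, Matrix.smul_apply, Matrix.sub_apply, Matrix.single,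
      Matrix.of_apply, smul_eq_mul, Complex.real_smul]
    split_ifs <;> push_cast <;> ring
  rw [Matrix.smul_apply, Matrix.sum_apply]
  have hsum : ∀ p ∈ Finset.univ, (∑ q : Fin r,
      ((Ω p q).re • (Matrix.single p q (1:ℂ) - Matrix.single q p (1:ℂ)) +
       (Ω p q).im • (Complex.I • (Matrix.single p q (1:ℂ) +
          Matrix.single q p (1:ℂ))))) a b
      = ∑ q : Fin r,
        ((if p = a ∧ q = b then ((Ω p q).re : ℂ) + (Ω p q).im * Complex.I else 0)
        + (if q = a ∧ p = b then -((Ω p q).re : ℂ) + (Ω p q).im * Complex.I else 0)) := by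
    intro p _
    rw [Matrix.sum_apply]
    exact Finset.sum_congr rfl fun q _ => expand p q
  rw [Finset.sum_congr rfl hsum]
  have split : ∑ p : Fin r, ∑ q : Fin r,
      ((if p = a ∧ q = b then ((Ω p q).re : ℂ) + (Ω p q).im * Complex.I else 0)
        + (if q = a ∧ p = b then -((Ω p q).re : ℂ) + (Ω p q).im * Complex.I else 0))
      = (∑ p : Fin r, ∑ q : Fin r,
          (if p = a ∧ q = b then ((Ω p q).re : ℂ) + (Ω p q).im * Complex.I else 0))
        + (∑ p : Fin r, ∑ q : Fin r,
          (if q = a ∧ p = b then -((Ω p q).re : ℂ) + (Ω p q).im * Complex.I else 0)) := by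
    rw [← Finset.sum_add_distrib]
    exact Finset.sum_congr rfl fun p _ => Finset.sum_add_distrib
  rw [split, double_sum_ite (fun p q => ((Ω p q).re : ℂ) + (Ω p q).im * Complex.I) a b,
    double_sum_ite' (fun p q => -((Ω p q).re : ℂ) + (Ω p q).im * Complex.I) a b]
  rw [hskew a b]
  simp only [Complex.real_smul, Complex.neg_re, Complex.conj_re, Complex.neg_im, Complex.conj_im]
  push_cast
  have hre := Complex.re_add_im (Ω a b)
  linear_combination -hre

lemma trace_conjTranspose_mul_self_re_eq_zero {n r : ℕ} (A : Matrix (Fin n) (Fin r) ℂ)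
    (h : ((Aᴴ * A).trace).re = 0) : A = 0 := by
  have key : ((Aᴴ * A).trace).re = ∑ j, ∑ i, Complex.normSq (A i j) := by
    simp only [Matrix.trace, Matrix.diag, Matrix.mul_apply, Matrix.conjTranspose_apply]
    rw [Complex.re_sum]
    refine Finset.sum_congr rfl fun j _ => ?_
    rw [Complex.re_sum]
    refine Finset.sum_congr rfl fun i _ => ?_
    rw [Complex.star_def, ← Complex.normSq_eq_conj_mul_self]
    simp
  rw [key] at h
  ext i j
  have h1 : ∀ j ∈ Finset.univ, ∀ i ∈ Finset.univ, (0:ℝ) ≤ Complex.normSq (A i j) := by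
    intros; exact Complex.normSq_nonneg _
  have h2 := (Finset.sum_eq_zero_iff_of_nonneg
    (fun j _ => Finset.sum_nonneg (h1 j (Finset.mem_univ j)))).mp h j (Finset.mem_univ j)
  have h3 := (Finset.sum_eq_zero_iff_of_nonneg (h1 j (Finset.mem_univ j))).mp h2 i
    (Finset.mem_univ i)
  simpa using Complex.normSq_eq_zero.mp h3

def rmulCLM {n r : ℕ} (R : Matrix (Fin r) (Fin r) ℂ) :
    Matrix (Fin n) (Fin r) ℂ →L[ℝ] Matrix (Fin n) (Fin r) ℂ :=
  LinearMap.toContinuousLinearMap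
    { toFun := fun Z => Z * R
      map_add' := fun a b => Matrix.add_mul a b R
      map_smul' := fun c Z => by simp [Matrix.smul_mul] }

def lmulCLM {n r : ℕ} (U : Matrix (Fin n) (Fin r) ℂ) :
    Matrix (Fin r) (Fin r) ℂ →L[ℝ] Matrix (Fin n) (Fin r) ℂ :=
  LinearMap.toContinuousLinearMap
    { toFun := fun Z => U * Z
      map_add' := fun a b => Matrix.mul_add U a b
      map_smul' := fun c Z => by simp [Matrix.mul_smul] }

lemma grad_equivariant {n r : ℕ}
    (h : Matrix (Fin n) (Fin r) ℂ → ℝ)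
    (g : Matrix (Fin n) (Fin r) ℂ → Matrix (Fin n) (Fin r) ℂ)
    (hsmooth : ContDiff ℝ 2 h)
    (hg : ∀ U Z, fderiv ℝ h U Z = (((g U)ᴴ * Z).trace).re)
    (hinv : ∀ (W : Matrix (Fin n) (Fin r) ℂ) (R : Matrix (Fin r) (Fin r) ℂ),
      Rᴴ * R = 1 → h (W * R) = h W)
    (W : Matrix (Fin n) (Fin r) ℂ) (R : Matrix (Fin r) (Fin r) ℂ) (hR : Rᴴ * R = 1) :
    g (W * R) = g W * R := by
  have hdiff : Differentiable ℝ h := hsmooth.differentiable (by norm_num)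
  have hfun : (fun X => h (X * R)) = h := funext fun X => hinv X R hR
  have hcomp : ∀ Z, fderiv ℝ (fun X => h (X * R)) W Z = fderiv ℝ h (W * R) (Z * R) := by
    intro Z
    have h1 : HasFDerivAt (fun X => h (X * R)) ((fderiv ℝ h (W * R)).comp (rmulCLM R)) W :=
      (hdiff (W * R)).hasFDerivAt.comp W (rmulCLM R).hasFDerivAt
    rw [h1.fderiv]; rfl
  have key : ∀ Z : Matrix (Fin n) (Fin r) ℂ, ((g (W * R))ᴴ * (Z * R)).trace.re = ((g W)ᴴ * Z).trace.re := by
    intro Z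
    rw [← hg, ← hg, ← hcomp, hfun]
  set A := g (W * R) - g W * R with hA
  have hz : ((Aᴴ) * A).trace.re = 0 := by
    have h1 := key (A * Rᴴ)
    have h2 : A * Rᴴ * R = A := by rw [Matrix.mul_assoc, hR, Matrix.mul_one]
    rw [h2] at h1
    have h3 : ((g W)ᴴ * (A * Rᴴ)).trace = (((g W) * R)ᴴ * A).trace := by
      rw [Matrix.conjTranspose_mul, ← Matrix.trace_mul_cycle, Matrix.mul_assoc]
    have h4 : (Aᴴ * A).trace = ((g (W * R))ᴴ * A).trace - (((g W) * R)ᴴ * A).trace := by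
      rw [hA, Matrix.conjTranspose_sub, Matrix.sub_mul, Matrix.trace_sub]
    rw [h4]
    simp only [Complex.sub_re]
    rw [h1, h3]
    ring
  have h5 := trace_conjTranspose_mul_self_re_eq_zero A hz
  rw [hA, sub_eq_zero] at h5
  exact h5

lemma fderiv_rot {n r : ℕ}
    (g : Matrix (Fin n) (Fin r) ℂ → Matrix (Fin n) (Fin r) ℂ)
    (hgdiff : Differentiable ℝ g)
    (U : Matrix (Fin n) (Fin r) ℂ)
    (hequiv : ∀ R : Matrix (Fin r) (Fin r) ℂ, Rᴴ * R = 1 → g (U * R) = g U * R)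
    (Ω P : Matrix (Fin r) (Fin r) ℂ)
    (hPP : P * P = P) (hΩΩ : Ω * Ω = -P) (hΩP : Ω * P = Ω) (hPΩ : P * Ω = Ω)
    (hΩs : Ωᴴ = -Ω) (hPs : Pᴴ = P) :
    fderiv ℝ g U (U * Ω) = g U * Ω := by
  set R : ℝ → Matrix (Fin r) (Fin r) ℂ :=
    fun t => 1 + (Real.cos t - 1) • P + Real.sin t • Ω with hRdef
  have hunit : ∀ t, (R t)ᴴ * R t = 1 := by
    intro t
    set a := Real.cos t - 1 with ha
    set b := Real.sin t with hb
    have hcs : a * a + 2 * a + b * b = 0 := by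
      have := Real.sin_sq_add_cos_sq t
      simp only [ha, hb]; nlinarith
    have hct : (R t)ᴴ = 1 + a • P + (-b) • Ω := by
      simp [hRdef, Matrix.conjTranspose_add, Matrix.conjTranspose_smul, hΩs, hPs, smul_neg,
        neg_smul]
      rfl
    have key : (1 + a • P + (-b) • Ω) * (1 + a • P + b • Ω)
        = 1 + (a * a + 2 * a + b * b) • P := by
      simp only [Matrix.mul_add, Matrix.add_mul, Matrix.smul_mul, Matrix.mul_smul,
        Matrix.mul_one, Matrix.one_mul, smul_smul, hPP, hΩP, hPΩ, hΩΩ, smul_neg]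
      module
    rw [hct]
    show (1 + a • P + (-b) • Ω) * (1 + a • P + b • Ω) = 1
    rw [key, hcs]
    simp
  have hR0 : R 0 = 1 := by simp [hRdef]
  have hD : HasDerivAt R Ω 0 := by
    have h1 : HasDerivAt (fun t : ℝ => Real.cos t - 1) (-Real.sin 0) 0 :=
      (Real.hasDerivAt_cos 0).sub_const 1
    have h2 : HasDerivAt (fun t : ℝ => Real.sin t) (Real.cos 0) 0 := Real.hasDerivAt_sin 0
    have h3 := ((h1.smul_const P).const_add (1 : Matrix (Fin r) (Fin r) ℂ)).add (h2.smul_const Ω)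
    exact h3.congr_deriv (by simp)
  have hL : HasDerivAt (fun t => U * R t) (U * Ω) 0 :=
    ((lmulCLM U).hasFDerivAt.comp_hasDerivAt 0 hD : )
  have hLHS : HasDerivAt (fun t => g (U * R t)) (fderiv ℝ g U (U * Ω)) 0 := by
    have hgF : HasFDerivAt g (fderiv ℝ g U) (U * R 0) := by
      rw [hR0, Matrix.mul_one]; exact (hgdiff U).hasFDerivAt
    exact (hgF.comp_hasDerivAt 0 hL : )
  have hRHS : HasDerivAt (fun t => g U * R t) (g U * Ω) 0 :=
    ((lmulCLM (g U)).hasFDerivAt.comp_hasDerivAt 0 hD : )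
  have hfeq : (fun t => g (U * R t)) = fun t => g U * R t :=
    funext fun t => hequiv (R t) (hunit t)
  rw [hfeq] at hLHS
  exact hLHS.unique hRHS

lemma alg_kernel {n r : ℕ} (U : Matrix (Fin n) (Fin r) ℂ) (hU : Uᴴ * U = 1)
    (S Ω : Matrix (Fin r) (Fin r) ℂ) (hS : Sᴴ = S) (hΩ : Ωᴴ = -Ω) :
    stiefelProj U ((U * S) * Ω) + weingarten U (U * Ω) (U * S) = 0 := by
  unfold stiefelProj weingarten symPart
  have h1 : Uᴴ * (U * S * Ω) = S * Ω := by
    rw [← Matrix.mul_assoc, ← Matrix.mul_assoc, hU, Matrix.one_mul]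
  have h2 : Uᴴ * (U * S) = S := by rw [← Matrix.mul_assoc, hU, Matrix.one_mul]
  have h3 : (U * Ω)ᴴ * (U * S) = -(Ω * S) := by
    rw [Matrix.conjTranspose_mul, Matrix.mul_assoc, h2, hΩ, Matrix.neg_mul]
  have h4 : (S * Ω)ᴴ = -(Ω * S) := by
    rw [Matrix.conjTranspose_mul, hS, hΩ, Matrix.neg_mul]
  have h5 : (-(Ω * S))ᴴ = S * Ω := by
    rw [Matrix.conjTranspose_neg, Matrix.conjTranspose_mul, hS, hΩ, Matrix.mul_neg, neg_neg]
  rw [h1, h2, h3, h4, h5]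
  rw [Matrix.mul_smul, Matrix.mul_smul, Matrix.mul_add, Matrix.mul_add, Matrix.mul_neg,
    Matrix.mul_assoc U S Ω, Matrix.mul_assoc U Ω S]
  module


/-- If `h` is unitarily invariant (invariant under right multiplication by
unitary matrices) and `U` is a stationary point, then for all `p < q` the
tangent vectors `Z_{p,q} = i·U(e_p e_qᵀ + e_q e_pᵀ)` and
`Z'_{p,q} = U(e_p e_qᵀ − e_q e_pᵀ)` lie in the kernel of the Riemannian Hessian
`𝓗[Z] = Proj_U(∇²h(U)[Z]) + A_U(Z, Proj⊥_U ∇h(U))`; consequently the rank of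
the Hessian on the tangent space is at most `2r(n−r)`. -/
theorem unitarily_invariant_hessian_degenerate (n r : ℕ)
    (h : Matrix (Fin n) (Fin r) ℂ → ℝ)
    (g : Matrix (Fin n) (Fin r) ℂ → Matrix (Fin n) (Fin r) ℂ)
    (hsmooth : ContDiff ℝ 2 h)
    (hg : ∀ U Z, fderiv ℝ h U Z = (((g U)ᴴ * Z).trace).re)
    (hgdiff : Differentiable ℝ g)
    (U : Matrix (Fin n) (Fin r) ℂ) (hU : Uᴴ * U = 1)
    (hinv : ∀ (W : Matrix (Fin n) (Fin r) ℂ) (R : Matrix (Fin r) (Fin r) ℂ),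
      Rᴴ * R = 1 → h (W * R) = h W)
    (hstat : g U - U * symPart (Uᴴ * g U) = 0)
    (𝓗 : Matrix (Fin n) (Fin r) ℂ →ₗ[ℝ] Matrix (Fin n) (Fin r) ℂ)
    (h𝓗 : ∀ Z, 𝓗 Z =
      stiefelProj U (fderiv ℝ g U Z) + weingarten U Z (U * symPart (Uᴴ * g U))) :
    (∀ p q : Fin r, p < q →
        𝓗 (Complex.I • (U * (Matrix.single p q (1 : ℂ) +
            Matrix.single q p (1 : ℂ)))) = 0 ∧
        𝓗 (U * (Matrix.single p q (1 : ℂ) -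
            Matrix.single q p (1 : ℂ))) = 0) ∧
      Module.finrank ℝ ↥(LinearMap.range (𝓗.domRestrict (stiefelTangent U))) ≤
        2 * r * (n - r) := by
  have hequiv : ∀ R : Matrix (Fin r) (Fin r) ℂ, Rᴴ * R = 1 → g (U * R) = g U * R :=
    fun R hR => grad_equivariant h g hsmooth hg hinv U R hR
  have hgU : g U = U * symPart (Uᴴ * g U) := by rwa [sub_eq_zero] at hstat
  have hSherm : (symPart (Uᴴ * g U))ᴴ = symPart (Uᴴ * g U) := by
    unfold symPart
    rw [Matrix.conjTranspose_smul, Matrix.conjTranspose_add,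
      Matrix.conjTranspose_conjTranspose]
    norm_num [add_comm]
  let T : Submodule ℝ (Matrix (Fin r) (Fin r) ℂ) :=
    { carrier := {Ω | fderiv ℝ g U (U * Ω) = g U * Ω}
      zero_mem' := by simp
      add_mem' := by
        intro a b ha hb
        simp only [Set.mem_setOf_eq] at ha hb ⊢
        rw [Matrix.mul_add, map_add, ha, hb, Matrix.mul_add]
      smul_mem' := by
        intro c Ωm hm
        simp only [Set.mem_setOf_eq] at hm ⊢
        rw [Matrix.mul_smul, _root_.map_smul, hm, Matrix.mul_smul] }
  have hmemT : ∀ Ω : Matrix (Fin r) (Fin r) ℂ, Ωᴴ = -Ω →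
      fderiv ℝ g U (U * Ω) = g U * Ω := by
    intro Ω hskw
    have hT : Ω ∈ T := by
      rw [skew_decomp Ω hskw]
      refine T.smul_mem _ (Submodule.sum_mem T fun p _ => Submodule.sum_mem T fun q _ =>
        T.add_mem (T.smul_mem _ ?_) (T.smul_mem _ ?_))
      · by_cases hpq : p = q
        · subst hpq; simpa using T.zero_mem
        · exact fderiv_rot g hgdiff U hequiv _ _ (bP_sq hpq) (bS_sq hpq)
            (bS_P hpq) (bP_S hpq) (bS_skew p q) (bP_herm p q)
      · by_cases hpq : p = q
        · subst hpq
          have h2 : Complex.I • (Matrix.single p p (1:ℂ) + Matrix.single p p 1)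
              = (2:ℝ) • (Complex.I • Matrix.single p p (1:ℂ)) := by
            rw [smul_add, two_smul]
          rw [h2]
          exact T.smul_mem _ (fderiv_rot g hgdiff U hequiv _ _ (bDP_sq p) (bD_sq p)
            (bD_P p) (bP_D p) (bD_skew p) (stdBasis_conjT p p))
        · exact fderiv_rot g hgdiff U hequiv _ _ (bP_sq hpq) (bI_sq hpq)
            (bI_P hpq) (bP_I hpq) (bI_skew p q) (bP_herm p q)
    exact hT
  have key : ∀ Ω : Matrix (Fin r) (Fin r) ℂ, Ωᴴ = -Ω → 𝓗 (U * Ω) = 0 := by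
    intro Ω hskw
    have hfd : fderiv ℝ g U (U * Ω) = (U * symPart (Uᴴ * g U)) * Ω := by
      rw [hmemT Ω hskw]
      conv_lhs => rw [hgU]
    rw [h𝓗, hfd]
    exact alg_kernel U hU _ Ω hSherm hskw
  constructor
  · intro p q hpq
    have hpq' : p ≠ q := ne_of_lt hpq
    constructor
    · rw [← Matrix.mul_smul]
      exact key _ (bI_skew p q)
    · exact key _ (bS_skew p q)
  · let π : Matrix (Fin n) (Fin r) ℂ →ₗ[ℝ] Matrix (Fin r) (Fin r) ℂ :=
      { toFun := fun Z => Uᴴ * Z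
        map_add' := fun a b => Matrix.mul_add _ a b
        map_smul' := fun c Z => by simp [Matrix.mul_smul] }
    have hπ : ∀ Z, π Z = Uᴴ * Z := fun Z => rfl
    have hsurj : Function.Surjective π := by
      intro A
      exact ⟨U * A, by rw [hπ, ← Matrix.mul_assoc, hU, Matrix.one_mul]⟩
    have hrange : LinearMap.range π = ⊤ := LinearMap.range_eq_top.mpr hsurj
    have hrn := LinearMap.finrank_range_add_finrank_ker π
    rw [hrange, finrank_top] at hrn
    have hdim1 : Module.finrank ℝ (Matrix (Fin n) (Fin r) ℂ) = n * r * 2 := by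
      rw [Module.finrank_matrix]
      simp [Complex.finrank_real_complex]
    have hdim2 : Module.finrank ℝ (Matrix (Fin r) (Fin r) ℂ) = r * r * 2 := by
      rw [Module.finrank_matrix]
      simp [Complex.finrank_real_complex]
    have hle : LinearMap.range (𝓗.domRestrict (stiefelTangent U)) ≤
        Submodule.map 𝓗 (LinearMap.ker π) := by
      rintro x hx
      rw [LinearMap.mem_range] at hx
      obtain ⟨⟨Z, hZ⟩, rfl⟩ := hx
      have hZ' : Uᴴ * Z + Zᴴ * U = 0 := hZ
      have hskwZ : (Uᴴ * Z)ᴴ = -(Uᴴ * Z) := by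
        rw [Matrix.conjTranspose_mul, Matrix.conjTranspose_conjTranspose]
        exact eq_neg_of_add_eq_zero_right hZ'
      refine ⟨Z - U * (Uᴴ * Z), LinearMap.mem_ker.mpr ?_, ?_⟩
      · show Uᴴ * (Z - U * (Uᴴ * Z)) = 0
        rw [Matrix.mul_sub, ← Matrix.mul_assoc, hU, Matrix.one_mul, sub_self]
      · show 𝓗 (Z - U * (Uᴴ * Z)) = 𝓗.domRestrict (stiefelTangent U) ⟨Z, hZ⟩
        rw [map_sub, key (Uᴴ * Z) hskwZ, sub_zero]
        rfl
    calc Module.finrank ℝ ↥(LinearMap.range (𝓗.domRestrict (stiefelTangent U)))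
        ≤ Module.finrank ℝ ↥(Submodule.map 𝓗 (LinearMap.ker π)) :=
          Submodule.finrank_mono hle
      _ ≤ Module.finrank ℝ ↥(LinearMap.ker π) := Submodule.finrank_map_le _ _
      _ ≤ 2 * r * (n - r) := by
          rcases le_or_gt r n with hrle | hrlt
          · obtain ⟨d, rfl⟩ : ∃ d, n = r + d := ⟨n - r, by omega⟩
            have hexp : (r + d) * r * 2 = r * r * 2 + 2 * r * d := by ring
            have hgoal : 2 * r * (r + d - r) = 2 * r * d := by congr 1; omega
            rw [hgoal]
            rw [hdim1, hdim2, hexp] at hrn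
            linarith
          · exfalso
            have hrpos : 0 < r := lt_of_le_of_lt (Nat.zero_le n) hrlt
            have hmul : n * r < r * r := by nlinarith
            rw [hdim1, hdim2] at hrn
            linarith


end
end

section
/- Let V ∈ ℂ^{n×n} be Hermitian positive semidefinite, h(U) = Re(trace(U^H V U)) on St(r,n,ℂ), and let U_* ∈ St(r,n,ℂ) be a stationary point of h. Then for every tangent vector Z ∈ T_{U_*}St(r,n,ℂ), the Riemannian Hessian satisfies Hess h(U_*)[Z] = 2(I_n − U_* U_*^H) V Z − 2(Z U_*^H + U_* Z^H) V U_*. -/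
open Matrix

noncomputable section

open ComplexOrder

/-- For `h(U) = Re(trace(Uᴴ V U))` with `V` Hermitian positive semidefinite
(so `∇h(U) = 2VU` and `∇²h(U)[Z] = 2VZ`), at a stationary point `U_*` the
Riemannian Hessian
`Hess h(U_*)[Z] = Proj_{U_*}(∇²h(U_*)[Z]) + A_{U_*}(Z, Proj⊥_{U_*}∇h(U_*))`
equals `2(I − U_* U_*ᴴ)VZ − 2(Z U_*ᴴ + U_* Zᴴ)V U_*` on every tangent vector. -/
theorem hessian_formula_compression (n r : ℕ)
    (V : Matrix (Fin n) (Fin n) ℂ) (hV : V.PosSemidef)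
    (Ustar : Matrix (Fin n) (Fin r) ℂ) (hU : Ustarᴴ * Ustar = 1)
    (hstat : (2 : ℂ) • (V * Ustar) -
      Ustar * symPart (Ustarᴴ * ((2 : ℂ) • (V * Ustar))) = 0) :
    ∀ Z : Matrix (Fin n) (Fin r) ℂ, Ustarᴴ * Z + Zᴴ * Ustar = 0 →
      stiefelProj Ustar ((2 : ℂ) • (V * Z)) +
          weingarten Ustar Z (Ustar * symPart (Ustarᴴ * ((2 : ℂ) • (V * Ustar)))) =
        (2 : ℂ) • ((1 - Ustar * Ustarᴴ) * V * Z) -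
          (2 : ℂ) • ((Z * Ustarᴴ + Ustar * Zᴴ) * V * Ustar) := by
  intro Z hZ
  have hVh : Vᴴ = V := hV.isHermitian
  have hW : Ustar * symPart (Ustarᴴ * ((2 : ℂ) • (V * Ustar))) = (2 : ℂ) • (V * Ustar) :=
    (sub_eq_zero.mp hstat).symm
  rw [weingarten, hW]
  simp only [stiefelProj, symPart, Matrix.conjTranspose_smul, Matrix.conjTranspose_mul,
    Matrix.conjTranspose_conjTranspose, hVh, star_ofNat, Matrix.mul_smul, Matrix.smul_mul,
    Matrix.mul_add, Matrix.add_mul, Matrix.sub_mul, Matrix.mul_sub, Matrix.one_mul,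
    smul_add, smul_sub, smul_smul, Matrix.mul_one, Matrix.mul_assoc]
  norm_num
  module

end
end

section
/- Let f : M → ℝ be a C¹ function on a Riemannian submanifold M ⊆ ℝ^n, and let {x_k} ⊆ M be a sequence such that for large k: (i) f(x_{k+1}) − f(x_k) ≥ σ‖grad f(x_k)‖·‖x_{k+1} − x_k‖ for some σ > 0, and (ii) x_{k+1} = x_k whenever f(x_{k+1}) = f(x_k). Suppose f is bounded above and the sequence {f(x_k)} is monotonically increasing, and suppose x_* is an accumulation point of {x_k} at which f satisfies a Łojasiewicz gradient inequality |f(y) − f(x_*)|^{1−ζ} ≤ c‖grad f(y)‖ in a neighborhood of x_* for some c > 0, ζ ∈ (0,1/2]. Then Σ_k ‖x_{k+1} − x_k‖ < ∞ and x_k → x_*. -/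
open Filter

lemma loj_aux {E : Type*} [NormedAddCommGroup E]
    (x : ℕ → E) (xstar : E) (hacc : MapClusterPt xstar atTop x)
    (h : ℕ → ℝ) (hh0 : ∀ k, 0 ≤ h k) (hhlim : Tendsto h atTop (nhds 0))
    (r : ℝ) (hr : 0 < r) (K : ℕ)
    (hstep : ∀ k, K ≤ k → dist (x k) xstar < r → ‖x (k + 1) - x k‖ ≤ h k - h (k + 1)) :
    Summable (fun k => ‖x (k + 1) - x k‖) ∧ Tendsto x atTop (nhds xstar) := by
  have hfreq : ∀ ε > (0:ℝ), ∃ᶠ m in atTop, dist (x m) xstar < ε := by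
    intro ε hε
    exact mapClusterPt_iff_frequently.1 hacc _ (Metric.ball_mem_nhds xstar hε)
  -- choose K' ≥ K with h K' < r/4 and dist (x K') xstar < r/4
  have hev : ∀ᶠ k in atTop, K ≤ k ∧ h k < r / 4 := by
    obtain ⟨N₀, hN₀⟩ := (Metric.tendsto_atTop.1 hhlim) (r/4) (by linarith)
    filter_upwards [eventually_ge_atTop K, eventually_ge_atTop N₀] with k h1 h2
    refine ⟨h1, ?_⟩
    have := hN₀ k h2
    rw [Real.dist_eq, sub_zero] at this
    calc h k ≤ |h k| := le_abs_self _
    _ < r/4 := this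
  obtain ⟨K', hK'ball, hKK', hK'h⟩ :
      ∃ K', dist (x K') xstar < r / 4 ∧ K ≤ K' ∧ h K' < r / 4 := by
    have := ((hfreq (r/4) (by linarith)).and_eventually hev).exists
    obtain ⟨k, h1, h2, h3⟩ := this
    exact ⟨k, h1, h2, h3⟩
  -- trapping claim
  have claim : ∀ k, K' ≤ k → ‖x k - x K'‖ ≤ h K' - h k := by
    intro k hk
    induction k, hk using Nat.le_induction with
    | base => simp
    | succ k hk ih =>
      have hball : dist (x k) xstar < r := by
        have : dist (x k) xstar ≤ ‖x k - x K'‖ + dist (x K') xstar := by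
          rw [dist_eq_norm]
          calc ‖x k - xstar‖ ≤ ‖x k - x K'‖ + ‖x K' - xstar‖ := by
                have := norm_sub_le_norm_sub_add_norm_sub (x k) (x K') xstar
                linarith [norm_add_le (x k - x K') (x K' - xstar)]
          _ = ‖x k - x K'‖ + dist (x K') xstar := by rw [dist_eq_norm]
        have h0k := hh0 k
        linarith
      have hs := hstep k (le_trans hKK' hk) hball
      calc ‖x (k+1) - x K'‖ ≤ ‖x (k+1) - x k‖ + ‖x k - x K'‖ := by
            have : x (k+1) - x K' = (x (k+1) - x k) + (x k - x K') := by abel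
            rw [this]; exact norm_add_le _ _
      _ ≤ (h k - h (k+1)) + (h K' - h k) := add_le_add hs ih
      _ = h K' - h (k+1) := by ring
  have hball : ∀ k, K' ≤ k → dist (x k) xstar < r := by
    intro k hk
    have := claim k hk
    have h0k := hh0 k
    rw [dist_eq_norm]
    calc ‖x k - xstar‖ ≤ ‖x k - x K'‖ + ‖x K' - xstar‖ := by
          have : x k - xstar = (x k - x K') + (x K' - xstar) := by abel
          rw [this]; exact norm_add_le _ _
    _ < (h K' - h k) + r/4 := by
          have hb : ‖x K' - xstar‖ < r/4 := by rw [← dist_eq_norm]; exact hK'ball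
          linarith
    _ < r := by linarith [hK'h]
  have hstep' : ∀ k, K' ≤ k → ‖x (k + 1) - x k‖ ≤ h k - h (k + 1) := fun k hk =>
    hstep k (le_trans hKK' hk) (hball k hk)
  -- summability
  have hsum : Summable (fun k => ‖x (k + 1) - x k‖) := by
    rw [← summable_nat_add_iff K']
    apply summable_of_sum_range_le (c := h K') (fun n => norm_nonneg _)
    intro m
    calc ∑ i ∈ Finset.range m, ‖x (i + K' + 1) - x (i + K')‖
        ≤ ∑ i ∈ Finset.range m, (h (i + K') - h (i + K' + 1)) := by
          apply Finset.sum_le_sum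
          intro i _
          exact hstep' (i + K') (Nat.le_add_left _ _)
    _ = h K' - h (m + K') := by
          have heq : ∀ i, i + K' + 1 = i + 1 + K' := fun i => by omega
          simp_rw [heq]
          have := Finset.sum_range_sub' (fun i => h (i + K')) m
          simpa using this
    _ ≤ h K' := by linarith [hh0 (m + K')]
  refine ⟨hsum, ?_⟩
  -- distance bound between iterates
  have hpath : ∀ k, K' ≤ k → ∀ m, k ≤ m → ‖x m - x k‖ ≤ h k - h m := by
    intro k hk m hm
    induction m, hm using Nat.le_induction with
    | base => simp
    | succ m hm ih =>
      have hs := hstep' m (le_trans hk hm)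
      calc ‖x (m+1) - x k‖ ≤ ‖x (m+1) - x m‖ + ‖x m - x k‖ := by
            have : x (m+1) - x k = (x (m+1) - x m) + (x m - x k) := by abel
            rw [this]; exact norm_add_le _ _
      _ ≤ (h m - h (m+1)) + (h k - h m) := add_le_add hs ih
      _ = h k - h (m+1) := by ring
  rw [Metric.tendsto_atTop]
  intro ε hε
  obtain ⟨M₁, hM₁⟩ := (Metric.tendsto_atTop.1 hhlim) (ε/2) (by linarith)
  refine ⟨max K' M₁, fun k hk => ?_⟩
  have hk1 : K' ≤ k := le_trans (le_max_left _ _) hk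
  have hk2 : M₁ ≤ k := le_trans (le_max_right _ _) hk
  have hhk : h k < ε/2 := by
    have := hM₁ k hk2
    rw [Real.dist_eq, sub_zero] at this
    calc h k ≤ |h k| := le_abs_self _
    _ < ε/2 := this
  obtain ⟨m, hm1, hm2⟩ := ((hfreq (ε/2) (by linarith)).and_eventually
    (eventually_ge_atTop k)).exists
  calc dist (x k) xstar ≤ dist (x k) (x m) + dist (x m) xstar := dist_triangle _ _ _
  _ = ‖x m - x k‖ + dist (x m) xstar := by rw [dist_comm, dist_eq_norm]
  _ ≤ (h k - h m) + dist (x m) xstar := by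
        linarith [hpath k hk1 m hm2]
  _ < ε := by linarith [hh0 m]


lemma loj_step_ineq (a b D G σ c ζ : ℝ) (hσ : 0 < σ) (hc : 0 < c)
    (hζ0 : 0 < ζ) (hζ1 : ζ ≤ 1/2)
    (hb : 0 ≤ b) (hba : b < a) (hD : 0 ≤ D)
    (hdesc : σ * G * D ≤ a - b) (hloj : a ^ (1 - ζ) ≤ c * G) :
    D ≤ c / (σ * ζ) * (a ^ ζ - b ^ ζ) := by
  have ha : 0 < a := lt_of_le_of_lt hb hba
  have hA1 : 0 < a ^ (1 - ζ) := Real.rpow_pos_of_pos ha _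
  have h1 : σ * D * a ^ (1 - ζ) ≤ c * (a - b) := by
    calc σ * D * a ^ (1 - ζ) ≤ σ * D * (c * G) :=
          mul_le_mul_of_nonneg_left hloj (by positivity)
    _ = c * (σ * G * D) := by ring
    _ ≤ c * (a - b) := mul_le_mul_of_nonneg_left hdesc hc.le
  have h2 : b ^ ζ * a ^ (1 - ζ) ≤ ζ * b + (1 - ζ) * a :=
    Real.geom_mean_le_arith_mean2_weighted hζ0.le (by linarith) hb ha.le (by ring)
  have h3 : a ^ ζ * a ^ (1 - ζ) = a := by
    rw [← Real.rpow_add ha]; norm_num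
  have h4 : σ * ζ * D * a ^ (1 - ζ) ≤ c * (a ^ ζ - b ^ ζ) * a ^ (1 - ζ) := by
    nlinarith [mul_le_mul_of_nonneg_left h1 hζ0.le, mul_le_mul_of_nonneg_left h2 hc.le]
  have h5 : σ * ζ * D ≤ c * (a ^ ζ - b ^ ζ) := le_of_mul_le_mul_right h4 hA1
  rw [div_mul_eq_mul_div, le_div_iff₀ (by positivity)]
  linarith


/-- Łojasiewicz-type convergence theorem (Schneider–Uschmajew): if a sequence
`x_k` in a submanifold `M ⊆ ℝⁿ` satisfies, for large `k`, the sufficient ascent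
condition `f(x_{k+1}) − f(x_k) ≥ σ‖grad f(x_k)‖·‖x_{k+1} − x_k‖` and the
condition that equal consecutive values force equal iterates; if `f` is bounded
above on `M` and `f(x_k)` is monotonically increasing; and if `x_*` is an
accumulation point at which a Łojasiewicz gradient inequality
`|f(y) − f(x_*)|^{1−ζ} ≤ c‖grad f(y)‖` holds near `x_*`, then
`Σ_k ‖x_{k+1} − x_k‖ < ∞` and `x_k → x_*`. -/
theorem lojasiewicz_convergence (n : ℕ) (M : Set (EuclideanSpace ℝ (Fin n)))
    (f : EuclideanSpace ℝ (Fin n) → ℝ)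
    (gradf : EuclideanSpace ℝ (Fin n) → EuclideanSpace ℝ (Fin n))
    (x : ℕ → EuclideanSpace ℝ (Fin n)) (hxM : ∀ k, x k ∈ M)
    (σ : ℝ) (hσ : 0 < σ) (N : ℕ)
    (hdescent : ∀ k ≥ N,
      σ * ‖gradf (x k)‖ * ‖x (k + 1) - x k‖ ≤ f (x (k + 1)) - f (x k))
    (hstall : ∀ k ≥ N, f (x (k + 1)) = f (x k) → x (k + 1) = x k)
    (hbdd : BddAbove (f '' M))
    (hmono : Monotone fun k => f (x k))
    (xstar : EuclideanSpace ℝ (Fin n))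
    (hacc : MapClusterPt xstar atTop x)
    (c : ℝ) (hc : 0 < c) (ζ : ℝ) (hζ : ζ ∈ Set.Ioc (0 : ℝ) (1 / 2))
    (𝒰 : Set (EuclideanSpace ℝ (Fin n))) (h𝒰 : 𝒰 ∈ nhds xstar)
    (hloj : ∀ y ∈ 𝒰 ∩ M, |f y - f xstar| ^ (1 - ζ) ≤ c * ‖gradf y‖) :
    Summable (fun k => ‖x (k + 1) - x k‖) ∧
      Tendsto x atTop (nhds xstar) := by
  obtain ⟨hζ0, hζhalf⟩ := hζ
  have hbR : BddAbove (Set.range fun k => f (x k)) :=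
    hbdd.mono (by rintro y ⟨k, rfl⟩; exact ⟨x k, hxM k, rfl⟩)
  set fstar := ⨆ k, f (x k) with hfstar
  have htend : Tendsto (fun k => f (x k)) atTop (nhds fstar) :=
    tendsto_atTop_ciSup hmono hbR
  have hle : ∀ k, f (x k) ≤ fstar := fun k => le_ciSup hbR k
  set e : ℕ → ℝ := fun k => fstar - f (x k) with he
  have he0 : ∀ k, 0 ≤ e k := fun k => by simp only [he]; linarith [hle k]
  have hea : ∀ j k, j ≤ k → e k ≤ e j := fun j k hjk => by
    simp only [he]; have := hmono hjk; simp only at this; linarith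
  have helim : Tendsto e atTop (nhds 0) := by
    have h := Tendsto.sub
      (tendsto_const_nhds : Tendsto (fun _ : ℕ => fstar) atTop (nhds fstar)) htend
    simpa using h
  obtain ⟨r, hr, hball⟩ := Metric.mem_nhds_iff.1 h𝒰
  by_cases hfx : f xstar = fstar
  · -- Case: f(xstar) equals the limit value
    refine loj_aux x xstar hacc (fun k => c / (σ * ζ) * e k ^ ζ)
      (fun k => mul_nonneg (by positivity) (Real.rpow_nonneg (he0 k) ζ)) ?_ r hr N ?_
    · have h1 : Tendsto (fun k => e k ^ ζ) atTop (nhds 0) := by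
        have hc0 : ContinuousAt (fun t : ℝ => t ^ ζ) 0 :=
          Real.continuousAt_rpow_const 0 ζ (Or.inr hζ0.le)
        have := hc0.tendsto.comp helim
        simpa [Function.comp_def, Real.zero_rpow (ne_of_gt hζ0)] using this
      have := h1.const_mul (c / (σ * ζ))
      simpa using this
    · intro k hk hdist
      have hU : x k ∈ 𝒰 := hball (Metric.mem_ball.2 hdist)
      have hlk := hloj (x k) ⟨hU, hxM k⟩
      by_cases hfe : f (x (k + 1)) = f (x k)
      · rw [hstall k hk hfe]
        simp only [sub_self, norm_zero]
        have h1 : e (k + 1) ^ ζ ≤ e k ^ ζ :=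
          Real.rpow_le_rpow (he0 _) (hea k (k + 1) (Nat.le_succ k)) hζ0.le
        have h2 : (0:ℝ) ≤ c / (σ * ζ) := by positivity
        nlinarith
      · have hlt : f (x k) < f (x (k + 1)) :=
          lt_of_le_of_ne (hmono (Nat.le_succ k)) (Ne.symm hfe)
        have habs : |f (x k) - f xstar| = e k := by
          rw [hfx, abs_of_nonpos (by linarith [hle k])]
          simp only [he]; ring
        rw [habs] at hlk
        have hdesc' : σ * ‖gradf (x k)‖ * ‖x (k + 1) - x k‖ ≤ e k - e (k + 1) := by
          have := hdescent k hk
          simp only [he]; linarith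
        have hba : e (k + 1) < e k := by simp only [he]; linarith
        have := loj_step_ineq (e k) (e (k + 1)) (‖x (k + 1) - x k‖) (‖gradf (x k)‖)
          σ c ζ hσ hc hζ0 hζhalf (he0 _) hba (norm_nonneg _) hdesc' hlk
        rw [← mul_sub]
        exact this
  · -- Case: f(xstar) differs from the limit value
    have hδ : 0 < |fstar - f xstar| := by
      rw [abs_pos, sub_ne_zero]
      exact fun h => hfx h.symm
    set δ := |fstar - f xstar| with hδdef
    set m := (δ / 2) ^ (1 - ζ) with hmdef
    have hm : 0 < m := Real.rpow_pos_of_pos (by linarith) _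
    obtain ⟨N₀, hN₀⟩ := (Metric.tendsto_atTop.1 helim) (δ / 2) (by linarith)
    refine loj_aux x xstar hacc (fun k => c / (σ * m) * e k)
      (fun k => mul_nonneg (by positivity) (he0 k)) ?_ r hr (max N N₀) ?_
    · have := helim.const_mul (c / (σ * m))
      simpa using this
    · intro k hk hdist
      have hkN : N ≤ k := le_trans (le_max_left _ _) hk
      have hkN₀ : N₀ ≤ k := le_trans (le_max_right _ _) hk
      have hU : x k ∈ 𝒰 := hball (Metric.mem_ball.2 hdist)
      have hlk := hloj (x k) ⟨hU, hxM k⟩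
      have hek : e k < δ / 2 := by
        have := hN₀ k hkN₀
        rwa [Real.dist_eq, sub_zero, abs_of_nonneg (he0 k)] at this
      have habs2 : δ / 2 ≤ |f (x k) - f xstar| := by
        have htri : |fstar - f xstar| ≤ |fstar - f (x k)| + |f (x k) - f xstar| :=
          abs_sub_le fstar (f (x k)) (f xstar)
        rw [abs_of_nonneg (by linarith [hle k] : (0:ℝ) ≤ fstar - f (x k))] at htri
        have hek2 : fstar - f (x k) < δ / 2 := by
          have := hek; simp only [he] at this; exact this
        linarith [hδdef.le, hδdef.ge]
      have hm' : m ≤ c * ‖gradf (x k)‖ :=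
        le_trans (Real.rpow_le_rpow (by linarith) habs2 (by linarith)) hlk
      have hdesc' : σ * ‖gradf (x k)‖ * ‖x (k + 1) - x k‖ ≤ e k - e (k + 1) := by
        have := hdescent k hkN
        simp only [he]; linarith
      rw [← mul_sub, div_mul_eq_mul_div, le_div_iff₀ (by positivity)]
      nlinarith [mul_le_mul_of_nonneg_right hm'
          (mul_nonneg hσ.le (norm_nonneg (x (k + 1) - x k))),
        mul_le_mul_of_nonneg_left hdesc' hc.le]
end
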